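/- arXiv:1511.04989 — 3 statements merged into one kernel-verified Lean document; each statement's English description precedes it below -/
import Mathlib

section
/- The total number of corners over all tree-like tableaux of size n equals the total number of corners over all permutation tableaux of size n plus (n−1)!. -/
open scoped BigOperators
open Nat

/-- The `t`-th border edge (1-indexed, read from northeast to southwest) of a Ferrers
shape with `cols` columns (rows given by the Young diagram `D`, possibly together with
extra empty rows) is a south step.  The south step belonging to row `i` occurs at
position `i + 1 + (cols - rowLen i)`. -/
def IsSouth (D : YoungDiagram) (cols t : ℕ) : Prop :=
  ∃ i, t = i + 1 + (cols - D.rowLen i)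

/-- Corners of a Ferrers diagram: cells whose right and bottom edges are both border
edges. -/
noncomputable def cornerCount (D : YoungDiagram) : ℕ :=
  {c : ℕ × ℕ | c ∈ D ∧ (c.1 + 1, c.2) ∉ D ∧ (c.1, c.2 + 1) ∉ D}.ncard

/-- A permutation tableau of size `n`: a Ferrers diagram of half-perimeter `n`
(`rows` rows, possibly empty, with the nonempty rows forming the Young diagram
`shape`) filled with `0`s and `1`s (`filling c = true` means the cell `c` contains
a `1`), such that every column contains at least one `1` and no `0` has a `1` above
it in its column and simultaneously a `1` to its left in its row. -/
structure PermTableau (n : ℕ) where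
  shape : YoungDiagram
  rows : ℕ
  rows_pos : 0 < rows
  rows_ge : shape.colLen 0 ≤ rows
  half : rows + shape.rowLen 0 = n
  filling : ℕ × ℕ → Bool
  support : ∀ c : ℕ × ℕ, c ∉ shape → filling c = false
  col_one : ∀ j < shape.rowLen 0, ∃ i, filling (i, j) = true
  avoid : ∀ i j : ℕ, (i, j) ∈ shape → filling (i, j) = false →
      (∃ i' < i, filling (i', j) = true) → ∀ j' < j, filling (i, j') = false

/-- The `t`-th border edge of a permutation tableau is a south step. -/
def PermTableau.south {n : ℕ} (T : PermTableau n) (t : ℕ) : Prop :=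
  IsSouth T.shape (T.shape.rowLen 0) t

/-- Row `i` of a permutation tableau is unrestricted: it contains no restricted `0`
(a `0` with a `1` above it in its column). -/
def PermTableau.unres {n : ℕ} (T : PermTableau n) (i : ℕ) : Prop :=
  ∀ j, (i, j) ∈ T.shape → T.filling (i, j) = false → ∀ i' < i, T.filling (i', j) = false

/-- The number of unrestricted rows of a permutation tableau. -/
noncomputable def PermTableau.U {n : ℕ} (T : PermTableau n) : ℕ :=
  {i | i < T.rows ∧ T.unres i}.ncard

/-- A tree-like tableau of size `n`: a Ferrers diagram of half-perimeter `n + 1`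
with pointed cells such that the top-left cell is pointed (the root point), every
row and every column contains a pointed cell, for every pointed cell all the cells
above it are empty or all the cells to its left are empty, and every non-root point
has a point above it or to its left (so that the points form a tree rooted at the
root point). -/
structure TreeLike (n : ℕ) where
  shape : YoungDiagram
  half : shape.colLen 0 + shape.rowLen 0 = n + 1
  point : ℕ × ℕ → Bool
  support : ∀ c : ℕ × ℕ, c ∉ shape → point c = false
  root : point (0, 0) = true
  row_point : ∀ i < shape.colLen 0, ∃ j, point (i, j) = true
  col_point : ∀ j < shape.rowLen 0, ∃ i, point (i, j) = true
  cond : ∀ i j : ℕ, point (i, j) = true →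
      (∀ i' < i, point (i', j) = false) ∨ (∀ j' < j, point (i, j') = false)
  conn : ∀ i j : ℕ, point (i, j) = true → (i, j) ≠ (0, 0) →
      (∃ i' < i, point (i', j) = true) ∨ (∃ j' < j, point (i, j') = true)

/-- The `t`-th border edge of a tree-like tableau is a south step (there are `n + 1`
border edges). -/
def TreeLike.south {n : ℕ} (T : TreeLike n) (t : ℕ) : Prop :=
  IsSouth T.shape (T.shape.rowLen 0) t

/-- A symmetric tree-like tableau of size `2 * n + 1`: a tree-like tableau invariant
under reflection about the main diagonal. -/
structure SymTreeLike (n : ℕ) extends TreeLike (2 * n + 1) where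
  sym_shape : toTreeLike.shape.transpose = toTreeLike.shape
  sym_point : ∀ i j : ℕ, toTreeLike.point (i, j) = toTreeLike.point (j, i)

/-- Cells of a shifted Ferrers diagram with `k` columns: on top a staircase of `k`
added rows, row `i` (for `i < k`) having the `i + 1` cells in columns `0, …, i`
with rightmost (diagonal) cell `(i, i)`, and below it the rows of the Ferrers
diagram `D` (row `k + i` of the shifted diagram is row `i` of `D`). -/
def BCell (k : ℕ) (D : YoungDiagram) (c : ℕ × ℕ) : Prop :=
  (c.1 < k ∧ c.2 ≤ c.1) ∨ (k ≤ c.1 ∧ (c.1 - k, c.2) ∈ D)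

/-- A type-B permutation tableau of size `n`: a shifted Ferrers diagram of
half-perimeter `n` (`cols` columns and `n - cols` lower rows, possibly empty, the
nonempty ones forming the Young diagram `shape`) filled with `0`s and `1`s such
that every column contains at least one `1`, no `0` has a `1` above it in its
column and simultaneously a `1` on its side in its row, and every row whose
diagonal cell contains a `0` is entirely filled with `0`s. -/
structure BTableau (n : ℕ) where
  cols : ℕ
  cols_le : cols ≤ n
  shape : YoungDiagram
  rows_ge : shape.colLen 0 ≤ n - cols
  width_le : shape.rowLen 0 ≤ cols
  filling : ℕ × ℕ → Bool
  support : ∀ c : ℕ × ℕ, ¬ BCell cols shape c → filling c = false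
  col_one : ∀ j < cols, ∃ i, filling (i, j) = true
  avoid : ∀ i j : ℕ, BCell cols shape (i, j) → filling (i, j) = false →
      (∃ i' < i, filling (i', j) = true) → ∀ j' < j, filling (i, j') = false
  diag : ∀ i < cols, filling (i, i) = false → ∀ j, filling (i, j) = false

/-- The `t`-th border edge of a type-B permutation tableau is a south step (there
are `n` border edges, those of the underlying, unshifted, Ferrers diagram). -/
def BTableau.south {n : ℕ} (B : BTableau n) (t : ℕ) : Prop :=
  IsSouth B.shape B.cols t

/-- Row `i` (among the `n` rows of the shifted diagram) of a type-B permutation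
tableau is unrestricted: it contains no restricted `0` and no diagonal `0`. -/
def BTableau.unres {n : ℕ} (B : BTableau n) (i : ℕ) : Prop :=
  (i < B.cols → B.filling (i, i) = true) ∧
  ∀ j, BCell B.cols B.shape (i, j) → B.filling (i, j) = false →
    ∀ i' < i, B.filling (i', j) = false

/-- The number of unrestricted rows of a type-B permutation tableau. -/
noncomputable def BTableau.U {n : ℕ} (B : BTableau n) : ℕ :=
  {i | i < n ∧ B.unres i}.ncard

/-- The number of corners of a type-B permutation tableau: occurrences of a south
border step immediately followed by a west border step. -/
noncomputable def BTableau.corners {n : ℕ} (B : BTableau n) : ℕ :=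
  {k | 1 ≤ k ∧ k + 1 ≤ n ∧ B.south k ∧ ¬ B.south (k + 1)}.ncard

namespace CornerAux

/-- Young diagram from a row-length function. -/
def mkYD (f : ℕ → ℕ) (anti : ∀ i, f (i + 1) ≤ f i) (N : ℕ) (hN : ∀ i, N ≤ i → f i = 0) :
    YoungDiagram where
  cells := (Finset.range N ×ˢ Finset.range (f 0)).filter fun c => c.2 < f c.1
  isLowerSet := by
    rintro ⟨i1, j1⟩ ⟨i2, j2⟩ ⟨hi, hj⟩ h
    simp only [Finset.coe_filter, Finset.mem_coe, Finset.mem_product, Finset.mem_range,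
      Set.mem_setOf_eq] at h ⊢
    have hanti : Antitone f := antitone_nat_of_succ_le anti
    simp only at hi hj
    have h21 : f i1 ≤ f i2 := hanti hi
    have hN2 : ¬ N ≤ i2 := fun hc => by have := hN i2 hc; omega
    have h0 : f i2 ≤ f 0 := hanti (Nat.zero_le _)
    omega

lemma mem_mkYD {f anti N hN} {c : ℕ × ℕ} : c ∈ mkYD f anti N hN ↔ c.2 < f c.1 := by
  rw [← YoungDiagram.mem_cells]
  show c ∈ (Finset.range N ×ˢ Finset.range (f 0)).filter (fun c => c.2 < f c.1) ↔ _
  rw [Finset.mem_filter, Finset.mem_product, Finset.mem_range, Finset.mem_range]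
  constructor
  · exact fun h => h.2
  · intro h
    have hanti : Antitone f := antitone_nat_of_succ_le anti
    have h1 : c.1 < N := by
      by_contra hc
      have := hN c.1 (by omega)
      omega
    exact ⟨⟨h1, lt_of_lt_of_le h (hanti (Nat.zero_le _))⟩, h⟩

lemma yd_ext {μ ν : YoungDiagram} (h : ∀ c : ℕ × ℕ, c ∈ μ ↔ c ∈ ν) : μ = ν :=
  SetLike.ext h

lemma rowLen_eq_of_iff {μ : YoungDiagram} {i m : ℕ} (h : ∀ j, (i, j) ∈ μ ↔ j < m) :
    μ.rowLen i = m := by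
  rcases Nat.lt_trichotomy (μ.rowLen i) m with h' | h' | h'
  · have := (h (μ.rowLen i)).2 h'
    rw [YoungDiagram.mem_iff_lt_rowLen] at this
    omega
  · exact h'
  · have := (h m).1 (by rw [YoungDiagram.mem_iff_lt_rowLen]; omega)
    omega

lemma colLen_eq_of_iff {μ : YoungDiagram} {j m : ℕ} (h : ∀ i, (i, j) ∈ μ ↔ i < m) :
    μ.colLen j = m := by
  rcases Nat.lt_trichotomy (μ.colLen j) m with h' | h' | h'
  · have := (h (μ.colLen j)).2 h'
    rw [YoungDiagram.mem_iff_lt_colLen] at this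
    omega
  · exact h'
  · have := (h m).1 (by rw [YoungDiagram.mem_iff_lt_colLen]; omega)
    omega

lemma rowLen_mkYD {f anti N hN} (i : ℕ) : (mkYD f anti N hN).rowLen i = f i :=
  rowLen_eq_of_iff fun j => by rw [mem_mkYD]

lemma rowLen_zero_of_colLen_le {μ : YoungDiagram} {i : ℕ} (h : μ.colLen 0 ≤ i) :
    μ.rowLen i = 0 := by
  by_contra hc
  have h1 : (i, 0) ∈ μ := by rw [YoungDiagram.mem_iff_lt_rowLen]; omega
  rw [YoungDiagram.mem_iff_lt_colLen] at h1
  omega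

lemma mem_le_colLen_zero {μ : YoungDiagram} {i j : ℕ} (h : (i, j) ∈ μ) : i < μ.colLen 0 :=
  lt_of_lt_of_le (YoungDiagram.mem_iff_lt_colLen.1 h) (μ.colLen_anti 0 j (Nat.zero_le _))

lemma mem_le_rowLen_zero {μ : YoungDiagram} {i j : ℕ} (h : (i, j) ∈ μ) : j < μ.rowLen 0 :=
  lt_of_lt_of_le (YoungDiagram.mem_iff_lt_rowLen.1 h) (μ.rowLen_anti 0 i (Nat.zero_le _))

/-- Strip the leftmost column. -/
def strip (μ : YoungDiagram) : YoungDiagram :=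
  mkYD (fun i => μ.rowLen i - 1)
    (fun i => by have := μ.rowLen_anti i (i + 1) (by omega); omega)
    (μ.colLen 0) (fun i hi => by rw [rowLen_zero_of_colLen_le hi])

lemma mem_strip {μ : YoungDiagram} {i j : ℕ} : (i, j) ∈ strip μ ↔ (i, j + 1) ∈ μ := by
  rw [strip, mem_mkYD, YoungDiagram.mem_iff_lt_rowLen]
  dsimp only
  omega

lemma rowLen_strip (μ : YoungDiagram) (i : ℕ) : (strip μ).rowLen i = μ.rowLen i - 1 :=
  rowLen_mkYD i

/-- Prepend a full column of height `h`. -/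
def addCol (h : ℕ) (μ : YoungDiagram) : YoungDiagram :=
  mkYD (fun i => if i < h then μ.rowLen i + 1 else 0)
    (fun i => by
      have := μ.rowLen_anti i (i + 1) (by omega)
      by_cases h1 : i + 1 < h <;> by_cases h2 : i < h <;> simp [h1, h2] <;> omega)
    h (fun i hi => by simp [Nat.not_lt.2 hi])

lemma mem_addCol {h : ℕ} {μ : YoungDiagram} {i j : ℕ} :
    (i, j) ∈ addCol h μ ↔ i < h ∧ (j = 0 ∨ (i, j - 1) ∈ μ) := by
  rw [addCol, mem_mkYD]
  dsimp only
  by_cases h2 : i < h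
  · simp only [h2, if_true, true_and]
    rw [YoungDiagram.mem_iff_lt_rowLen]
    rcases Nat.eq_zero_or_pos j with rfl | hj
    · simp
    · constructor
      · intro hlt
        right
        omega
      · rintro (h' | h') <;> omega
  · simp [h2]

lemma rowLen_addCol (h : ℕ) (μ : YoungDiagram) (i : ℕ) :
    (addCol h μ).rowLen i = if i < h then μ.rowLen i + 1 else 0 :=
  rowLen_mkYD i

lemma colLen_addCol (h : ℕ) (μ : YoungDiagram) : (addCol h μ).colLen 0 = h :=
  colLen_eq_of_iff fun i => by rw [mem_addCol]; simp

lemma colLen_strip (μ : YoungDiagram) : (strip μ).colLen 0 = μ.colLen 1 :=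
  colLen_eq_of_iff fun i => by rw [mem_strip, YoungDiagram.mem_iff_lt_colLen]

lemma addCol_strip (μ : YoungDiagram) : addCol (μ.colLen 0) (strip μ) = μ := by
  apply yd_ext
  rintro ⟨i, j⟩
  rw [mem_addCol]
  rcases Nat.eq_zero_or_pos j with rfl | hj
  · simp [YoungDiagram.mem_iff_lt_colLen]
  · have hj1 : j - 1 + 1 = j := by omega
    constructor
    · rintro ⟨h1, h2 | h2⟩
      · omega
      · rw [mem_strip, hj1] at h2
        exact h2
    · intro h
      refine ⟨mem_le_colLen_zero h, Or.inr ?_⟩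
      rw [mem_strip, hj1]
      exact h

lemma strip_addCol {h : ℕ} {μ : YoungDiagram} (hc : μ.colLen 0 ≤ h) :
    strip (addCol h μ) = μ := by
  apply yd_ext
  rintro ⟨i, j⟩
  rw [mem_strip, mem_addCol]
  simp only [Nat.add_sub_cancel]
  constructor
  · rintro ⟨h1, h2 | h2⟩
    · omega
    · exact h2
  · intro hm
    exact ⟨lt_of_lt_of_le (mem_le_colLen_zero hm) hc, Or.inr hm⟩

def cornerIdx (μ : YoungDiagram) : Finset ℕ :=
  (Finset.range (μ.colLen 0)).filter fun i => μ.rowLen (i + 1) < μ.rowLen i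

lemma cornerSet_eq (μ : YoungDiagram) :
    {c : ℕ × ℕ | c ∈ μ ∧ (c.1 + 1, c.2) ∉ μ ∧ (c.1, c.2 + 1) ∉ μ} =
      ↑((cornerIdx μ).image fun i => (i, μ.rowLen i - 1)) := by
  ext ⟨i, j⟩
  simp only [Set.mem_setOf_eq, Finset.coe_image, Set.mem_image, Finset.mem_coe, cornerIdx,
    Finset.mem_filter, Finset.mem_range]
  rw [YoungDiagram.mem_iff_lt_rowLen, YoungDiagram.mem_iff_lt_rowLen,
    YoungDiagram.mem_iff_lt_rowLen]
  constructor
  · rintro ⟨h1, h2, h3⟩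
    refine ⟨i, ⟨?_, by omega⟩, by simp; omega⟩
    have : (i, 0) ∈ μ := YoungDiagram.mem_iff_lt_rowLen.2 (by omega)
    exact mem_le_colLen_zero this
  · rintro ⟨i', ⟨hi', hlt⟩, heq⟩
    rw [Prod.mk.injEq] at heq
    obtain ⟨rfl, rfl⟩ := heq
    have hpos : 0 < μ.rowLen i' :=
      YoungDiagram.mem_iff_lt_rowLen.1 (YoungDiagram.mem_iff_lt_colLen.2 hi')
    refine ⟨by omega, by omega, by omega⟩

lemma cornerCount_eq (μ : YoungDiagram) : cornerCount μ = (cornerIdx μ).card := by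
  rw [cornerCount, cornerSet_eq, Set.ncard_coe_finset,
    Finset.card_image_of_injective _ (fun a b hab => by simpa using congrArg Prod.fst hab)]

lemma cornerCount_addCol {μ : YoungDiagram} {R : ℕ} (hc : μ.colLen 0 ≤ R) (hR : 0 < R) :
    cornerCount (addCol R μ) = cornerCount μ + (if μ.colLen 0 < R then 1 else 0) := by
  obtain ⟨r, rfl⟩ : ∃ r, R = r + 1 := ⟨R - 1, by omega⟩
  rw [cornerCount_eq, cornerCount_eq, cornerIdx, cornerIdx, colLen_addCol]
  have hpred : ∀ i < r, ((addCol (r + 1) μ).rowLen (i + 1) < (addCol (r + 1) μ).rowLen i ↔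
      μ.rowLen (i + 1) < μ.rowLen i) := by
    intro i hi
    rw [rowLen_addCol, rowLen_addCol, if_pos (by omega), if_pos (by omega)]
    omega
  have hr : (addCol (r + 1) μ).rowLen (r + 1) < (addCol (r + 1) μ).rowLen r := by
    rw [rowLen_addCol, rowLen_addCol, if_neg (show ¬ (r + 1 < r + 1) by omega),
      if_pos (show r < r + 1 by omega)]
    omega
  rw [Finset.range_add_one, Finset.filter_insert, if_pos hr,
    Finset.card_insert_of_notMem (by simp)]
  have hres : (Finset.range r).filter
        (fun i => (addCol (r + 1) μ).rowLen (i + 1) < (addCol (r + 1) μ).rowLen i) =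
      (Finset.range r).filter (fun i => μ.rowLen (i + 1) < μ.rowLen i) := by
    apply Finset.filter_congr
    intro i hi
    simp only [Finset.mem_range] at hi
    simp [hpred i hi]
  rw [hres]
  by_cases hlt : μ.colLen 0 < r + 1
  · -- colLen ≤ r : the two filters agree
    simp only [if_pos hlt]
    congr 1
    have : (Finset.range r).filter (fun i => μ.rowLen (i + 1) < μ.rowLen i) =
        (Finset.range (μ.colLen 0)).filter (fun i => μ.rowLen (i + 1) < μ.rowLen i) := by
      ext i
      simp only [Finset.mem_filter, Finset.mem_range]
      constructor
      · rintro ⟨h1, h2⟩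
        refine ⟨?_, h2⟩
        by_contra hcon
        have := rowLen_zero_of_colLen_le (μ := μ) (i := i) (by omega)
        omega
      · rintro ⟨h1, h2⟩
        exact ⟨by omega, h2⟩
    rw [this]
  · -- colLen = r + 1
    have hcl : μ.colLen 0 = r + 1 := by omega
    simp only [if_neg hlt, Nat.add_zero]
    rw [hcl, Finset.range_add_one, Finset.filter_insert, if_pos, Finset.card_insert_of_notMem
      (by simp)]
    have h1 : μ.rowLen (r + 1) = 0 := rowLen_zero_of_colLen_le (by omega)
    have h2 : 0 < μ.rowLen r := by
      by_contra hcon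
      have : (r, 0) ∉ μ := by rw [YoungDiagram.mem_iff_lt_rowLen]; omega
      rw [YoungDiagram.mem_iff_lt_colLen] at this
      omega
    omega


/-! ### The data model for permutation tableaux -/

structure PTD (n : ℕ) where
  rows : ℕ
  rows_pos : 0 < rows
  shape : YoungDiagram
  rows_ge : shape.colLen 0 ≤ rows
  half : rows + shape.rowLen 0 = n
  top : ℕ → ℕ
  res : ℕ → Option ℕ
  top_mem : ∀ j, j < shape.rowLen 0 → (top j, j) ∈ shape
  top_pin : ∀ j, shape.rowLen 0 ≤ j → top j = 0
  res_mem : ∀ i c, res i = some c → (i, c) ∈ shape ∧ top c < i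
  compat : ∀ j c, j < shape.rowLen 0 → res (top j) = some c → c < j

lemma ptdExt {n : ℕ} {P Q : PTD n} (h1 : P.rows = Q.rows) (h2 : P.shape = Q.shape)
    (h3 : P.top = Q.top) (h4 : P.res = Q.res) : P = Q := by
  cases P; cases Q
  simp only at h1 h2 h3 h4
  subst h1; subst h2; subst h3; subst h4
  rfl

lemma PTD.res_none_of_ge {n : ℕ} (D : PTD n) {i : ℕ} (h : D.shape.colLen 0 ≤ i) :
    D.res i = none := by
  cases hr : D.res i with
  | none => rfl
  | some c =>
    have := (D.res_mem i c hr).1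
    have := mem_le_colLen_zero this
    omega

lemma PTD.res_none_of_rows_le {n : ℕ} (D : PTD n) {i : ℕ} (h : D.rows ≤ i) :
    D.res i = none :=
  D.res_none_of_ge (le_trans D.rows_ge h)

lemma PTD.top_lt_rows {n : ℕ} (D : PTD n) {j : ℕ} (h : j < D.shape.rowLen 0) :
    D.top j < D.rows :=
  lt_of_lt_of_le (mem_le_colLen_zero (D.top_mem j h)) D.rows_ge

lemma boolExt {a b : Bool} (h : a = true ↔ b = true) : a = b := by
  cases a <;> cases b <;> simp_all

lemma permExt {n : ℕ} {P Q : PermTableau n} (h1 : P.rows = Q.rows)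
    (h2 : P.shape = Q.shape) (h3 : P.filling = Q.filling) : P = Q := by
  cases P; cases Q
  simp only at h1 h2 h3
  subst h1; subst h2; subst h3
  rfl

/-! ### PermTableau ≃ PTD -/

def Rset {n : ℕ} (P : PermTableau n) (i : ℕ) : Set ℕ :=
  {c | (i, c) ∈ P.shape ∧ P.filling (i, c) = false ∧ ∃ i' < i, P.filling (i', c) = true}

lemma Rset_bdd {n : ℕ} (P : PermTableau n) (i : ℕ) : BddAbove (Rset P i) :=
  ⟨P.shape.rowLen 0, fun c hc => le_of_lt (mem_le_rowLen_zero hc.1)⟩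

lemma fill_mem {n : ℕ} {P : PermTableau n} {i j : ℕ} (h : P.filling (i, j) = true) :
    (i, j) ∈ P.shape := by
  by_contra hc
  rw [P.support _ hc] at h
  exact absurd h (by simp)

lemma col_nonempty {n : ℕ} (P : PermTableau n) {j : ℕ} (h : j < P.shape.rowLen 0) :
    {i | P.filling (i, j) = true}.Nonempty := P.col_one j h

open scoped Classical

noncomputable def toPTD {n : ℕ} (P : PermTableau n) : PTD n where
  rows := P.rows
  rows_pos := P.rows_pos
  shape := P.shape
  rows_ge := P.rows_ge
  half := P.half
  top := fun j => if j < P.shape.rowLen 0 then sInf {i | P.filling (i, j) = true} else 0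
  res := fun i => if h : (Rset P i).Nonempty then some (sSup (Rset P i)) else none
  top_mem := by
    intro j hj
    rw [if_pos hj]
    exact fill_mem (Nat.sInf_mem (col_nonempty P hj))
  top_pin := fun j hj => if_neg (by omega)
  res_mem := by
    intro i c hc
    by_cases h : (Rset P i).Nonempty
    · rw [dif_pos h] at hc
      have hc2 : sSup (Rset P i) = c := by simpa using hc
      have hmem : c ∈ Rset P i := hc2 ▸ Nat.sSup_mem h (Rset_bdd P i)
      obtain ⟨hm, hfalse, i', hi', htrue⟩ := hmem
      refine ⟨hm, ?_⟩
      have hcw : c < P.shape.rowLen 0 := mem_le_rowLen_zero hm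
      rw [if_pos hcw]
      exact lt_of_le_of_lt (Nat.sInf_le htrue) hi'
    · rw [dif_neg h] at hc
      exact absurd hc (by simp)
  compat := by
    intro j c hj hc
    set t := if j < P.shape.rowLen 0 then sInf {i | P.filling (i, j) = true} else 0 with ht
    have htj : t = sInf {i | P.filling (i, j) = true} := by rw [ht, if_pos hj]
    have htrue : P.filling (t, j) = true := by
      rw [htj]; exact Nat.sInf_mem (col_nonempty P hj)
    by_cases h : (Rset P t).Nonempty
    · rw [dif_pos h] at hc
      have hc2 : sSup (Rset P t) = c := by simpa using hc
      have hmem : c ∈ Rset P t := hc2 ▸ Nat.sSup_mem h (Rset_bdd P t)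
      obtain ⟨hm, hfalse, i', hi', htrue'⟩ := hmem
      by_contra hcon
      rcases Nat.lt_or_ge j c with hlt | hge
      · have := P.avoid t c hm hfalse ⟨i', hi', htrue'⟩ j hlt
        rw [this] at htrue
        exact absurd htrue (by simp)
      · have : c = j := by omega
        rw [this] at hfalse
        rw [hfalse] at htrue
        exact absurd htrue (by simp)
    · rw [dif_neg h] at hc
      exact absurd hc (by simp)

def fillB {n : ℕ} (D : PTD n) (i j : ℕ) : Bool :=
  decide ((i, j) ∈ D.shape) && decide (D.top j ≤ i) &&
    (match D.res i with
     | none => true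
     | some r => decide (r < j))

lemma fill_iff {n : ℕ} (D : PTD n) (i j : ℕ) :
    fillB D i j = true ↔ ((i, j) ∈ D.shape ∧ D.top j ≤ i ∧ ∀ r, D.res i = some r → r < j) := by
  cases h : D.res i with
  | none => simp [fillB, h]
  | some r => simp [fillB, h, and_assoc]

def ofPTD {n : ℕ} (D : PTD n) : PermTableau n where
  shape := D.shape
  rows := D.rows
  rows_pos := D.rows_pos
  rows_ge := D.rows_ge
  half := D.half
  filling := fun c => fillB D c.1 c.2
  support := by
    intro c hc
    show fillB D c.1 c.2 = false
    cases hfb : fillB D c.1 c.2 with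
    | false => rfl
    | true => exact absurd ((fill_iff D c.1 c.2).1 hfb).1 hc
  col_one := by
    intro j hj
    refine ⟨D.top j, (fill_iff D _ j).2 ⟨D.top_mem j hj, le_refl _, ?_⟩⟩
    exact fun r hr => D.compat j r hj hr
  avoid := by
    intro i j hmem hfalse hex j' hj'
    dsimp only at hfalse hex ⊢
    obtain ⟨i', hi', htrue⟩ := hex
    have htop : D.top j ≤ i' := ((fill_iff D i' j).1 htrue).2.1
    have hnot : ¬ ((i, j) ∈ D.shape ∧ D.top j ≤ i ∧ ∀ r, D.res i = some r → r < j) := by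
      rw [← fill_iff]
      simp [hfalse]
    have hres : ∃ r, D.res i = some r ∧ j ≤ r := by
      by_contra hcon
      push_neg at hcon
      exact hnot ⟨hmem, by omega, fun r hr => by have := hcon r hr; omega⟩
    obtain ⟨r, hr, hjr⟩ := hres
    show fillB D i j' = false
    cases hfb : fillB D i j' with
    | false => rfl
    | true =>
      have := ((fill_iff D i j').1 hfb).2.2 r hr
      omega

lemma fill_char {n : ℕ} (P : PermTableau n) (i j : ℕ) :
    P.filling (i, j) = true ↔
      ((i, j) ∈ P.shape ∧ (toPTD P).top j ≤ i ∧ ∀ r, (toPTD P).res i = some r → r < j) := by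
  constructor
  · intro h
    have hmem := fill_mem h
    have hjw : j < P.shape.rowLen 0 := mem_le_rowLen_zero hmem
    refine ⟨hmem, ?_, ?_⟩
    · show (if j < P.shape.rowLen 0 then sInf {i | P.filling (i, j) = true} else 0) ≤ i
      rw [if_pos hjw]
      exact Nat.sInf_le h
    · intro r hr
      have hrmem : r ∈ Rset P i := by
        by_cases hne : (Rset P i).Nonempty
        · have : (toPTD P).res i = some (sSup (Rset P i)) := dif_pos hne
          rw [this] at hr
          obtain rfl : sSup (Rset P i) = r := by simpa using hr
          exact Nat.sSup_mem hne (Rset_bdd P i)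
        · have : (toPTD P).res i = none := dif_neg hne
          rw [this] at hr
          exact absurd hr (by simp)
      obtain ⟨hm, hfalse, i', hi', htrue⟩ := hrmem
      by_contra hcon
      rcases Nat.lt_or_ge j r with hlt | hge
      · have := P.avoid i r hm hfalse ⟨i', hi', htrue⟩ j hlt
        rw [this] at h
        exact absurd h (by simp)
      · have : r = j := by omega
        rw [this] at hfalse
        rw [hfalse] at h
        exact absurd h (by simp)
  · rintro ⟨hmem, htop, hres⟩
    by_contra hcon
    have hfalse : P.filling (i, j) = false := by
      cases hf : P.filling (i, j) with
      | false => rfl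
      | true => exact absurd hf hcon
    have hjw : j < P.shape.rowLen 0 := mem_le_rowLen_zero hmem
    have htop' : (toPTD P).top j = sInf {i | P.filling (i, j) = true} := if_pos hjw
    have hsmem : P.filling (sInf {i | P.filling (i, j) = true}, j) = true :=
      Nat.sInf_mem (col_nonempty P hjw)
    have hlt : sInf {i | P.filling (i, j) = true} < i := by
      rcases Nat.lt_or_ge (sInf {i | P.filling (i, j) = true}) i with h' | h'
      · exact h'
      · have : (toPTD P).top j ≥ i ∨ (toPTD P).top j = i := by
          rw [htop']; omega
        have heq : sInf {i | P.filling (i, j) = true} = i := by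
          rw [htop'] at htop; omega
        rw [heq] at hsmem
        rw [hsmem] at hfalse
        exact absurd hfalse (by simp)
    have hjRset : j ∈ Rset P i :=
      ⟨hmem, hfalse, ⟨sInf {i | P.filling (i, j) = true}, hlt, hsmem⟩⟩
    have hne : (Rset P i).Nonempty := ⟨j, hjRset⟩
    have hr : (toPTD P).res i = some (sSup (Rset P i)) := dif_pos hne
    have := hres _ hr
    have := le_csSup (Rset_bdd P i) hjRset
    omega

noncomputable def equivPT (n : ℕ) : PermTableau n ≃ PTD n where
  toFun := toPTD
  invFun := ofPTD
  left_inv := by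
    intro P
    refine permExt rfl rfl ?_
    funext c
    obtain ⟨i, j⟩ := c
    show fillB (toPTD P) i j = P.filling (i, j)
    apply boolExt
    rw [fill_iff, fill_char]
    exact Iff.rfl
  right_inv := by
    intro D
    refine ptdExt rfl rfl ?_ ?_
    · funext j
      show (if j < D.shape.rowLen 0 then sInf {i | fillB D i j = true} else 0) = D.top j
      by_cases hj : j < D.shape.rowLen 0
      · rw [if_pos hj]
        have h1 : fillB D (D.top j) j = true :=
          (fill_iff D _ j).2 ⟨D.top_mem j hj, le_refl _, fun r hr => D.compat j r hj hr⟩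
        have h2 : sInf {i | fillB D i j = true} ≤ D.top j := Nat.sInf_le h1
        have h3' : sInf {i | fillB D i j = true} ∈ {i | fillB D i j = true} :=
          Nat.sInf_mem ⟨D.top j, h1⟩
        have h3 : fillB D (sInf {i | fillB D i j = true}) j = true := h3'
        have h4 := ((fill_iff D _ j).1 h3).2.1
        omega
      · rw [if_neg hj, D.top_pin j (by omega)]
    · funext i
      show (if h : (Rset (ofPTD D) i).Nonempty then some (sSup (Rset (ofPTD D) i)) else none)
        = D.res i
      have hRset : ∀ c, c ∈ Rset (ofPTD D) i ↔
          ((i, c) ∈ D.shape ∧ D.top c < i ∧ ∃ r, D.res i = some r ∧ c ≤ r) := by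
        intro c
        constructor
        · rintro ⟨hm, hfalse, i', hi', htrue⟩
          have hm' : (i, c) ∈ D.shape := hm
          have h1 : D.top c ≤ i' := ((fill_iff D i' c).1 htrue).2.1
          have hnot : ¬ ((i, c) ∈ D.shape ∧ D.top c ≤ i ∧ ∀ r, D.res i = some r → r < c) := by
            rw [← fill_iff]
            simp only [Bool.not_eq_true]
            exact hfalse
          have hres : ∃ r, D.res i = some r ∧ c ≤ r := by
            by_contra hcon
            push_neg at hcon
            exact hnot ⟨hm', by omega, fun r hr => by have := hcon r hr; omega⟩
          exact ⟨hm', by omega, hres⟩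
        · rintro ⟨hm, htop, r, hr, hcr⟩
          refine ⟨hm, ?_, ⟨D.top c, htop, ?_⟩⟩
          · show fillB D i c = false
            cases hf : fillB D i c with
            | false => rfl
            | true =>
              have := ((fill_iff D i c).1 hf).2.2 r hr
              omega
          · refine (fill_iff D _ c).2 ⟨D.top_mem c (mem_le_rowLen_zero hm), le_refl _, ?_⟩
            exact fun r' hr' => D.compat c r' (mem_le_rowLen_zero hm) hr'
      cases hres : D.res i with
      | none =>
        rw [dif_neg]
        rintro ⟨c, hc⟩
        obtain ⟨-, -, r, hr, -⟩ := (hRset c).1 hc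
        rw [hres] at hr
        exact absurd hr (by simp)
      | some r =>
        have hrmem : r ∈ Rset (ofPTD D) i := by
          rw [hRset]
          exact ⟨(D.res_mem i r hres).1, (D.res_mem i r hres).2, r, hres, le_refl r⟩
        rw [dif_pos ⟨r, hrmem⟩]
        congr 1
        have h1 : r ≤ sSup (Rset (ofPTD D) i) := le_csSup (Rset_bdd (ofPTD D) i) hrmem
        have h2 := Nat.sSup_mem ⟨r, hrmem⟩ (Rset_bdd (ofPTD D) i)
        obtain ⟨-, -, r', hr', hle⟩ := (hRset _).1 h2
        rw [hres] at hr'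
        have : r' = r := by simpa using hr'.symm
        omega


/-! ### TreeLike ≃ PTD -/

variable {n : ℕ}

lemma tltExt {T S : TreeLike n} (h1 : T.shape = S.shape) (h2 : T.point = S.point) : T = S := by
  cases T; cases S
  simp only at h1 h2
  subst h1; subst h2
  rfl

noncomputable def aT (T : TreeLike n) (j : ℕ) : ℕ := sInf {i | T.point (i, j) = true}
noncomputable def bT (T : TreeLike n) (i : ℕ) : ℕ := sInf {j | T.point (i, j) = true}

lemma point_mem {T : TreeLike n} {i j : ℕ} (h : T.point (i, j) = true) : (i, j) ∈ T.shape := by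
  by_contra hc
  rw [T.support _ hc] at h
  exact absurd h (by simp)

lemma tlt_shape_pos (T : TreeLike n) : (0, 0) ∈ T.shape := point_mem T.root

lemma aT_point {T : TreeLike n} {j : ℕ} (h : j < T.shape.rowLen 0) :
    T.point (aT T j, j) = true := Nat.sInf_mem (T.col_point j h)

lemma aT_le {T : TreeLike n} {i j : ℕ} (h : T.point (i, j) = true) : aT T j ≤ i := Nat.sInf_le h

lemma bT_point {T : TreeLike n} {i : ℕ} (h : i < T.shape.colLen 0) :
    T.point (i, bT T i) = true := Nat.sInf_mem (T.row_point i h)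

lemma bT_le {T : TreeLike n} {i j : ℕ} (h : T.point (i, j) = true) : bT T i ≤ j := Nat.sInf_le h

lemma aT_zero (T : TreeLike n) : aT T 0 = 0 := by
  have := aT_le T.root
  omega

lemma bT_zero (T : TreeLike n) : bT T 0 = 0 := by
  have := bT_le T.root
  omega

lemma bT_row_empty {T : TreeLike n} {i : ℕ} (h : T.shape.colLen 0 ≤ i) : bT T i = 0 := by
  have hempty : {j | T.point (i, j) = true} = ∅ := by
    ext j
    simp only [Set.mem_setOf_eq, Set.mem_empty_iff_false, iff_false]
    intro hp
    exact absurd (mem_le_colLen_zero (point_mem hp)) (by omega)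
  rw [bT, hempty, Nat.sInf_empty]

lemma L_ba {T : TreeLike n} {j : ℕ} (h1 : 1 ≤ j) (h2 : j < T.shape.rowLen 0) :
    bT T (aT T j) < j := by
  have hp := aT_point h2
  have hble : bT T (aT T j) ≤ j := bT_le hp
  rcases Nat.lt_or_ge (bT T (aT T j)) j with hlt | hge
  · exact hlt
  · rcases T.conn _ _ hp (by simp; omega) with ⟨i', hi', hp'⟩ | ⟨j', hj', hp'⟩
    · have := aT_le hp'
      omega
    · have := bT_le hp'
      omega

lemma L_ab {T : TreeLike n} {i j : ℕ} (hp : T.point (i, j) = true) (h1 : 1 ≤ j)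
    (hbe : bT T i = j) : aT T j < i := by
  rcases T.conn i j hp (by simp; omega) with ⟨i', hi', hp'⟩ | ⟨j', hj', hp'⟩
  · have := aT_le hp'
    omega
  · have := bT_le hp'
    omega

lemma point_char {T : TreeLike n} (i j : ℕ) : T.point (i, j) = true ↔
    ((j < T.shape.rowLen 0 ∧ i = aT T j) ∨ (i < T.shape.colLen 0 ∧ j = bT T i)) := by
  constructor
  · intro hp
    have hmem := point_mem hp
    have hjw := mem_le_rowLen_zero hmem
    have hic := mem_le_colLen_zero hmem
    rcases T.cond i j hp with hab | hlf
    · left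
      refine ⟨hjw, ?_⟩
      have h1 := aT_le hp
      rcases Nat.lt_or_ge (aT T j) i with hlt | hge
      · have hfalse := hab _ hlt
        rw [aT_point hjw] at hfalse
        simp at hfalse
      · omega
    · right
      refine ⟨hic, ?_⟩
      have h1 := bT_le hp
      rcases Nat.lt_or_ge (bT T i) j with hlt | hge
      · have hfalse := hlf _ hlt
        rw [bT_point hic] at hfalse
        simp at hfalse
      · omega
  · rintro (⟨h1, rfl⟩ | ⟨h1, rfl⟩)
    · exact aT_point h1
    · exact bT_point h1

noncomputable def toPTDofTLT (T : TreeLike n) : PTD n where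
  rows := T.shape.colLen 0
  rows_pos := YoungDiagram.mem_iff_lt_colLen.1 (tlt_shape_pos T)
  shape := strip T.shape
  rows_ge := by
    rw [colLen_strip]
    exact T.shape.colLen_anti 0 1 (by omega)
  half := by
    have h1 := T.half
    have h2 : 0 < T.shape.rowLen 0 := YoungDiagram.mem_iff_lt_rowLen.1 (tlt_shape_pos T)
    rw [rowLen_strip]
    omega
  top := fun j => if j + 1 < T.shape.rowLen 0 then aT T (j + 1) else 0
  res := fun i => if 0 < bT T i then some (bT T i - 1) else none
  top_mem := by
    intro j hj
    rw [rowLen_strip] at hj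
    rw [if_pos (by omega), mem_strip]
    exact point_mem (aT_point (by omega))
  top_pin := by
    intro j hj
    rw [rowLen_strip] at hj
    rw [if_neg (by omega)]
  res_mem := by
    intro i c hc
    by_cases hb : 0 < bT T i
    · rw [if_pos hb] at hc
      have hceq : bT T i - 1 = c := by simpa using hc
      have hic : i < T.shape.colLen 0 := by
        by_contra hcon
        have := bT_row_empty (T := T) (i := i) (by omega)
        omega
      have hp := bT_point hic
      have hmem := point_mem hp
      have hc1 : c + 1 = bT T i := by omega
      constructor
      · rw [mem_strip, hc1]
        exact hmem
      · have haux := L_ab hp (by omega) rfl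
        have hw : c + 1 < T.shape.rowLen 0 := by
          rw [hc1]
          exact mem_le_rowLen_zero hmem
        rw [if_pos (by omega)]
        rw [hc1]
        omega
    · rw [if_neg hb] at hc
      exact absurd hc (by simp)
  compat := by
    intro j c hj hc
    rw [rowLen_strip] at hj
    have hj1 : j + 1 < T.shape.rowLen 0 := by omega
    rw [if_pos hj1] at hc
    by_cases hb : 0 < bT T (aT T (j + 1))
    · rw [if_pos hb] at hc
      have hceq : bT T (aT T (j + 1)) - 1 = c := by simpa using hc
      have := L_ba (T := T) (j := j + 1) (by omega) (by omega)
      omega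
    · rw [if_neg hb] at hc
      exact absurd hc (by simp)

def bfunD (D : PTD n) (i : ℕ) : ℕ :=
  match D.res i with
  | none => 0
  | some c => c + 1

def pointP (D : PTD n) (i j : ℕ) : Prop :=
  (0 < j ∧ j - 1 < D.shape.rowLen 0 ∧ i = D.top (j - 1)) ∨ (j = 0 ∧ i = 0) ∨
    (i < D.rows ∧ j = bfunD D i)

instance (D : PTD n) (i j : ℕ) : Decidable (pointP D i j) := by
  unfold pointP
  infer_instance

lemma bfunD_lt_rows {D : PTD n} {i c : ℕ} (h : D.res i = some c) : i < D.rows :=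
  lt_of_lt_of_le (mem_le_colLen_zero (D.res_mem i c h).1) D.rows_ge

def ofPTDtoTLT (D : PTD n) : TreeLike n where
  shape := addCol D.rows D.shape
  half := by
    rw [colLen_addCol, rowLen_addCol, if_pos D.rows_pos]
    have := D.half
    omega
  point := fun c => decide (pointP D c.1 c.2)
  support := by
    rintro ⟨i, j⟩ hc
    simp only [decide_eq_false_iff_not]
    rintro (⟨hj, hjw, rfl⟩ | ⟨rfl, rfl⟩ | ⟨hir, rfl⟩)
    · exact hc (by
        rw [mem_addCol]
        exact ⟨D.top_lt_rows hjw, Or.inr (D.top_mem _ hjw)⟩)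
    · exact hc (by rw [mem_addCol]; exact ⟨D.rows_pos, Or.inl rfl⟩)
    · apply hc
      rw [mem_addCol]
      cases hres : D.res i with
      | none => exact ⟨hir, Or.inl (by simp [bfunD, hres])⟩
      | some c =>
        refine ⟨hir, Or.inr ?_⟩
        have : bfunD D i = c + 1 := by simp [bfunD, hres]
        rw [this]
        simpa using (D.res_mem i c hres).1
  root := by simp [pointP]
  row_point := by
    intro i hi
    rw [colLen_addCol] at hi
    exact ⟨bfunD D i, by simp [pointP, hi]⟩
  col_point := by
    intro j hj
    rw [rowLen_addCol, if_pos D.rows_pos] at hj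
    rcases Nat.eq_zero_or_pos j with rfl | hjp
    · exact ⟨0, by simp [pointP]⟩
    · refine ⟨D.top (j - 1), ?_⟩
      simp only [decide_eq_true_eq]
      exact Or.inl ⟨hjp, by omega, rfl⟩
  cond := by
    intro i j hp
    simp only [decide_eq_true_eq] at hp
    rcases hp with ⟨hj, hjw, rfl⟩ | ⟨rfl, rfl⟩ | ⟨hir, rfl⟩
    · left
      intro i' hi'
      simp only [decide_eq_false_iff_not]
      rintro (⟨hj2, hjw2, heq⟩ | ⟨rfl, rfl⟩ | ⟨hir2, hbe⟩)
      · omega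
      · omega
      · cases hres : D.res i' with
        | none => simp only [bfunD, hres] at hbe; omega
        | some c =>
          simp only [bfunD, hres] at hbe
          have h2 := (D.res_mem i' c hres).2
          have hcj : c = j - 1 := by omega
          rw [hcj] at h2
          omega
    · left
      intro i' hi'
      omega
    · right
      intro j' hj'
      simp only [decide_eq_false_iff_not]
      have hbz : 0 < bfunD D i := by omega
      have hres : ∃ c, D.res i = some c ∧ bfunD D i = c + 1 := by
        cases hres : D.res i with
        | none => simp only [bfunD, hres] at hbz; omega
        | some c => exact ⟨c, rfl, by simp only [bfunD, hres]⟩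
      obtain ⟨c, hres, hbe⟩ := hres
      rintro (⟨hj2, hjw2, heq⟩ | ⟨rfl, rfl⟩ | ⟨hir2, hbe2⟩)
      · have := D.compat (j' - 1) c hjw2 (by rw [← heq, hres])
        omega
      · have := (D.res_mem 0 c hres).2
        omega
      · omega
  conn := by
    intro i j hp hne
    simp only [decide_eq_true_eq] at hp
    rcases hp with ⟨hj, hjw, rfl⟩ | ⟨rfl, rfl⟩ | ⟨hir, rfl⟩
    · right
      refine ⟨bfunD D (D.top (j - 1)), ?_, ?_⟩
      · cases hres : D.res (D.top (j - 1)) with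
        | none => simp only [bfunD, hres]; omega
        | some c =>
          simp only [bfunD, hres]
          have := D.compat (j - 1) c hjw hres
          omega
      · simp only [decide_eq_true_eq]
        exact Or.inr (Or.inr ⟨D.top_lt_rows hjw, rfl⟩)
    · exact absurd rfl hne
    · cases hres : D.res i with
      | none =>
        left
        have hbz : bfunD D i = 0 := by simp only [bfunD, hres]
        have hiz : 0 < i := by
          rcases Nat.eq_zero_or_pos i with rfl | h
          · exact absurd (by rw [hbz]) hne
          · exact h
        exact ⟨0, hiz, by simp [pointP, hbz]⟩
      | some c =>
        left
        have hbe : bfunD D i = c + 1 := by simp only [bfunD, hres]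
        refine ⟨D.top c, (D.res_mem i c hres).2, ?_⟩
        simp only [decide_eq_true_eq]
        refine Or.inl ⟨by omega, ?_, by simp [hbe]⟩
        have := mem_le_rowLen_zero (D.res_mem i c hres).1
        omega

lemma top_toPTDofTLT (T : TreeLike n) (j : ℕ) :
    (toPTDofTLT T).top j = if j + 1 < T.shape.rowLen 0 then aT T (j + 1) else 0 := rfl

lemma res_toPTDofTLT (T : TreeLike n) (i : ℕ) :
    (toPTDofTLT T).res i = if 0 < bT T i then some (bT T i - 1) else none := rfl

lemma bfunD_toPTDofTLT (T : TreeLike n) (i : ℕ) : bfunD (toPTDofTLT T) i = bT T i := by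
  have hres := res_toPTDofTLT T i
  by_cases hb : 0 < bT T i
  · rw [if_pos hb] at hres
    simp only [bfunD, hres]
    omega
  · rw [if_neg hb] at hres
    simp only [bfunD, hres]
    omega

lemma bfunD_le_of_point {D : PTD n} {i j : ℕ}
    (hp : (ofPTDtoTLT D).point (i, j) = true) : bfunD D i ≤ j := by
  have hp' : pointP D i j := by
    have : decide (pointP D i j) = true := hp
    exact of_decide_eq_true this
  rcases hp' with ⟨hj, hjw, heq⟩ | ⟨rfl, rfl⟩ | ⟨hir, rfl⟩
  · cases hres : D.res i with
    | none => simp only [bfunD, hres]; omega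
    | some c =>
      simp only [bfunD, hres]
      rw [heq] at hres
      have := D.compat (j - 1) c hjw hres
      omega
  · cases hres : D.res 0 with
    | none => simp only [bfunD, hres]; omega
    | some c =>
      have := (D.res_mem 0 c hres).2
      omega
  · exact le_refl _

lemma point_ofPTDtoTLT_bfun {D : PTD n} {i : ℕ} (hir : i < D.rows) :
    (ofPTDtoTLT D).point (i, bfunD D i) = true := by
  show decide (pointP D i (bfunD D i)) = true
  rw [decide_eq_true_eq]
  exact Or.inr (Or.inr ⟨hir, rfl⟩)

noncomputable def equivTLT (n : ℕ) : TreeLike n ≃ PTD n where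
  toFun := toPTDofTLT
  invFun := ofPTDtoTLT
  left_inv := by
    intro T
    refine tltExt ?_ ?_
    · show addCol (T.shape.colLen 0) (strip T.shape) = T.shape
      exact addCol_strip T.shape
    · funext c
      obtain ⟨i, j⟩ := c
      show decide (pointP (toPTDofTLT T) i j) = T.point (i, j)
      apply boolExt
      rw [decide_eq_true_eq, point_char]
      have hwpos : 0 < T.shape.rowLen 0 := YoungDiagram.mem_iff_lt_rowLen.1 (tlt_shape_pos T)
      have hw : (toPTDofTLT T).shape.rowLen 0 = T.shape.rowLen 0 - 1 := rowLen_strip _ 0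
      constructor
      · rintro (⟨hj, hjw, rfl⟩ | ⟨rfl, rfl⟩ | ⟨hir, rfl⟩)
        · left
          rw [hw] at hjw
          obtain ⟨j', rfl⟩ : ∃ j', j = j' + 1 := ⟨j - 1, by omega⟩
          rw [top_toPTDofTLT]
          have : j' + 1 - 1 = j' := rfl
          rw [this] at hjw ⊢
          rw [if_pos (by omega)]
          exact ⟨by omega, rfl⟩
        · left
          exact ⟨hwpos, (aT_zero T).symm⟩
        · right
          exact ⟨hir, bfunD_toPTDofTLT T i⟩
      · rintro (⟨hjw, rfl⟩ | ⟨hic, rfl⟩)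
        · rcases Nat.eq_zero_or_pos j with rfl | hjp
          · exact Or.inr (Or.inl ⟨rfl, aT_zero T⟩)
          · left
            obtain ⟨j', rfl⟩ : ∃ j', j = j' + 1 := ⟨j - 1, by omega⟩
            refine ⟨by omega, ?_, ?_⟩
            · rw [hw]
              omega
            · rw [top_toPTDofTLT]
              have : j' + 1 - 1 = j' := rfl
              rw [this, if_pos (by omega)]
        · exact Or.inr (Or.inr ⟨hic, (bfunD_toPTDofTLT T i).symm⟩)
  right_inv := by
    intro D
    refine ptdExt ?_ ?_ ?_ ?_
    · show (addCol D.rows D.shape).colLen 0 = D.rows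
      exact colLen_addCol _ _
    · show strip (addCol D.rows D.shape) = D.shape
      exact strip_addCol D.rows_ge
    · funext j
      show (if j + 1 < (ofPTDtoTLT D).shape.rowLen 0 then aT (ofPTDtoTLT D) (j + 1) else 0)
        = D.top j
      have hw : (ofPTDtoTLT D).shape.rowLen 0 = D.shape.rowLen 0 + 1 := by
        show (addCol D.rows D.shape).rowLen 0 = _
        rw [rowLen_addCol, if_pos D.rows_pos]
      by_cases hj : j < D.shape.rowLen 0
      · rw [if_pos (by omega)]
        apply le_antisymm
        · apply Nat.sInf_le
          show decide (pointP D (D.top j) (j + 1)) = true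
          rw [decide_eq_true_eq]
          exact Or.inl ⟨by omega, by simpa using hj, rfl⟩
        · show D.top j ≤ sInf {i | (ofPTDtoTLT D).point (i, j + 1) = true}
          have hne : {i | (ofPTDtoTLT D).point (i, j + 1) = true}.Nonempty :=
            (ofPTDtoTLT D).col_point (j + 1) (by omega)
          have hmem := Nat.sInf_mem hne
          have hp' : pointP D (sInf {i | (ofPTDtoTLT D).point (i, j + 1) = true}) (j + 1) :=
            of_decide_eq_true hmem
          rcases hp' with ⟨-, -, heq⟩ | ⟨h0, -⟩ | ⟨-, hbe⟩
          · have : j + 1 - 1 = j := rfl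
            rw [this] at heq
            omega
          · omega
          · cases hres : D.res (sInf {i | (ofPTDtoTLT D).point (i, j + 1) = true}) with
            | none => simp only [bfunD, hres] at hbe; omega
            | some c =>
              simp only [bfunD, hres] at hbe
              have := (D.res_mem _ c hres).2
              have hcj : c = j := by omega
              rw [hcj] at this
              omega
      · rw [if_neg (by omega), D.top_pin j (by omega)]
    · funext i
      show (if 0 < bT (ofPTDtoTLT D) i then some (bT (ofPTDtoTLT D) i - 1) else none) = D.res i
      by_cases hir : i < D.rows
      · have hbe : bT (ofPTDtoTLT D) i = bfunD D i := by
          apply le_antisymm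
          · exact Nat.sInf_le (point_ofPTDtoTLT_bfun hir)
          · have hic : i < (ofPTDtoTLT D).shape.colLen 0 := by
              show i < (addCol D.rows D.shape).colLen 0
              rw [colLen_addCol]
              exact hir
            exact bfunD_le_of_point (bT_point hic)
        cases hres : D.res i with
        | none =>
          have : bfunD D i = 0 := by simp only [bfunD, hres]
          rw [if_neg (by omega)]
        | some c =>
          have hb : bfunD D i = c + 1 := by simp only [bfunD, hres]
          rw [if_pos (by omega), hbe, hb]
          simp
      · have hempty : bT (ofPTDtoTLT D) i = 0 := by
          apply bT_row_empty
          show (addCol D.rows D.shape).colLen 0 ≤ i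
          rw [colLen_addCol]
          omega
        rw [if_neg (by omega), D.res_none_of_rows_le (by omega)]

lemma shape_eq_addCol (T : TreeLike n) :
    T.shape = addCol ((equivTLT n) T).rows ((equivTLT n) T).shape :=
  (addCol_strip T.shape).symm

/-! ### The S and W decomposition -/

structure ExtD {m : ℕ} (Q : PTD m) where
  t0 : ℕ
  ht0 : t0 < Q.rows
  hres : Q.res t0 = none
  bs : Finset ℕ
  hbs : ∀ i ∈ bs, i < Q.rows ∧ t0 < i ∧ Q.res i = none

lemma extDExt {m : ℕ} {Q : PTD m} {e e' : ExtD Q} (h1 : e.t0 = e'.t0) (h2 : e.bs = e'.bs) :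
    e = e' := by
  cases e; cases e'
  simp only at h1 h2
  subst h1; subst h2
  rfl

def resShift : Option ℕ → Option ℕ
  | some (c + 1) => some c
  | _ => none

@[simp] lemma resShift_none : resShift none = none := rfl
@[simp] lemma resShift_some_zero : resShift (some 0) = none := rfl
@[simp] lemma resShift_some_succ (c : ℕ) : resShift (some (c + 1)) = some c := rfl

/-- Removing an empty bottom row. -/
def Sfwd {m : ℕ} (hm : 1 ≤ m) (P : PTD (m + 1)) (h : P.shape.colLen 0 < P.rows) : PTD m where
  rows := P.rows - 1
  rows_pos := by
    by_contra hc
    have h1 : P.rows = 1 := by have := P.rows_pos; omega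
    have h2 : P.shape.colLen 0 = 0 := by omega
    have h3 : P.shape.rowLen 0 = 0 := rowLen_zero_of_colLen_le (by omega)
    have := P.half
    omega
  shape := P.shape
  rows_ge := by have := P.rows_ge; omega
  half := by have := P.half; omega
  top := P.top
  res := P.res
  top_mem := P.top_mem
  top_pin := P.top_pin
  res_mem := P.res_mem
  compat := P.compat

/-- Adding an empty bottom row. -/
def Sbwd {m : ℕ} (Q : PTD m) : PTD (m + 1) where
  rows := Q.rows + 1
  rows_pos := by omega
  shape := Q.shape
  rows_ge := by have := Q.rows_ge; omega
  half := by have := Q.half; omega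
  top := Q.top
  res := Q.res
  top_mem := Q.top_mem
  top_pin := Q.top_pin
  res_mem := Q.res_mem
  compat := Q.compat

lemma Sbwd_colLen_lt {m : ℕ} (Q : PTD m) : (Sbwd Q).shape.colLen 0 < (Sbwd Q).rows := by
  show Q.shape.colLen 0 < Q.rows + 1
  have := Q.rows_ge
  omega

def ES (m : ℕ) (hm : 1 ≤ m) :
    {P : PTD (m + 1) // P.shape.colLen 0 < P.rows} ≃ PTD m where
  toFun P := Sfwd hm P.1 P.2
  invFun Q := ⟨Sbwd Q, Sbwd_colLen_lt Q⟩
  left_inv := by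
    rintro ⟨P, hP⟩
    apply Subtype.ext
    refine ptdExt ?_ rfl rfl rfl
    show P.rows - 1 + 1 = P.rows
    have := P.rows_pos
    omega
  right_inv := by
    intro Q
    refine ptdExt ?_ rfl rfl rfl
    show Q.rows + 1 - 1 = Q.rows
    omega

lemma width_pos_of_full {m : ℕ} (P : PTD (m + 1)) (h : P.shape.colLen 0 = P.rows) :
    0 < P.shape.rowLen 0 := by
  have h1 : (0, 0) ∈ P.shape := YoungDiagram.mem_iff_lt_colLen.2 (by have := P.rows_pos; omega)
  exact YoungDiagram.mem_iff_lt_rowLen.1 h1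

/-- Removing a full first column. -/
def Wfwd {m : ℕ} (P : PTD (m + 1)) (h : P.shape.colLen 0 = P.rows) : PTD m where
  rows := P.rows
  rows_pos := P.rows_pos
  shape := strip P.shape
  rows_ge := by
    rw [colLen_strip]
    exact le_trans (P.shape.colLen_anti 0 1 (by omega)) P.rows_ge
  half := by
    have := P.half
    have := width_pos_of_full P h
    rw [rowLen_strip]
    omega
  top := fun j => P.top (j + 1)
  res := fun i => resShift (P.res i)
  top_mem := by
    intro j hj
    rw [rowLen_strip] at hj
    rw [mem_strip]
    exact P.top_mem (j + 1) (by omega)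
  top_pin := by
    intro j hj
    rw [rowLen_strip] at hj
    have := width_pos_of_full P h
    exact P.top_pin (j + 1) (by omega)
  res_mem := by
    intro i c hc
    cases hres : P.res i with
    | none => rw [hres] at hc; simp at hc
    | some c' =>
      rw [hres] at hc
      match c', hc with
      | (c'' + 1), hc =>
        have hcc : c'' = c := by simpa using hc
        subst hcc
        have := P.res_mem i (c'' + 1) hres
        rw [mem_strip]
        exact ⟨this.1, this.2⟩
  compat := by
    intro j c hj hc
    rw [rowLen_strip] at hj
    cases hres : P.res (P.top (j + 1)) with
    | none => rw [hres] at hc; simp at hc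
    | some c' =>
      rw [hres] at hc
      match c', hc with
      | (c'' + 1), hc =>
        have hcc : c'' = c := by simpa using hc
        subst hcc
        have := P.compat (j + 1) (c'' + 1) (by omega) hres
        omega

lemma Wfwd_res_top0 {m : ℕ} (P : PTD (m + 1)) (h : P.shape.colLen 0 = P.rows) :
    P.res (P.top 0) = none := by
  cases hres : P.res (P.top 0) with
  | none => rfl
  | some c =>
    have := P.compat 0 c (width_pos_of_full P h) hres
    omega

def WfwdExt {m : ℕ} (P : PTD (m + 1)) (h : P.shape.colLen 0 = P.rows) : ExtD (Wfwd P h) where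
  t0 := P.top 0
  ht0 := P.top_lt_rows (width_pos_of_full P h)
  hres := by
    show resShift (P.res (P.top 0)) = none
    rw [Wfwd_res_top0 P h]
    rfl
  bs := (Finset.range P.rows).filter fun i => P.res i = some 0
  hbs := by
    intro i hi
    rw [Finset.mem_filter, Finset.mem_range] at hi
    obtain ⟨hir, hres⟩ := hi
    have := P.res_mem i 0 hres
    refine ⟨hir, this.2, ?_⟩
    show resShift (P.res i) = none
    rw [hres]
    rfl

/-- Adding a full first column. -/
def Wbwd {m : ℕ} (Q : PTD m) (e : ExtD Q) : PTD (m + 1) where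
  rows := Q.rows
  rows_pos := Q.rows_pos
  shape := addCol Q.rows Q.shape
  rows_ge := le_of_eq (colLen_addCol _ _)
  half := by
    rw [rowLen_addCol, if_pos Q.rows_pos]
    have := Q.half
    omega
  top := fun j => match j with
    | 0 => e.t0
    | j' + 1 => Q.top j'
  res := fun i => match Q.res i with
    | some c => some (c + 1)
    | none => if i ∈ e.bs then some 0 else none
  top_mem := by
    intro j hj
    rw [rowLen_addCol, if_pos Q.rows_pos] at hj
    match j with
    | 0 =>
      rw [mem_addCol]
      exact ⟨e.ht0, Or.inl rfl⟩
    | j' + 1 =>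
      rw [mem_addCol]
      refine ⟨Q.top_lt_rows (by omega), Or.inr ?_⟩
      simpa using Q.top_mem j' (by omega)
  top_pin := by
    intro j hj
    rw [rowLen_addCol, if_pos Q.rows_pos] at hj
    match j with
    | j' + 1 => exact Q.top_pin j' (by omega)
  res_mem := by
    intro i c hc
    cases hres : Q.res i with
    | some c' =>
      rw [hres] at hc
      have hcc : c = c' + 1 := by simpa using hc.symm
      subst hcc
      have := Q.res_mem i c' hres
      constructor
      · rw [mem_addCol]
        exact ⟨lt_of_lt_of_le (mem_le_colLen_zero this.1) Q.rows_ge, Or.inr (by simpa using this.1)⟩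
      · show (match c' + 1 with | 0 => e.t0 | j' + 1 => Q.top j') < i
        exact this.2
    | none =>
      rw [hres] at hc
      by_cases hbs : i ∈ e.bs
      · rw [if_pos hbs] at hc
        have hcc : c = 0 := by simpa using hc.symm
        subst hcc
        obtain ⟨h1, h2, h3⟩ := e.hbs i hbs
        constructor
        · rw [mem_addCol]
          exact ⟨h1, Or.inl rfl⟩
        · exact lt_of_le_of_lt (le_refl _) h2
      · rw [if_neg hbs] at hc
        exact absurd hc (by simp)
  compat := by
    intro j c hj hc
    match j with
    | 0 =>
      exfalso
      have h1 : Q.res e.t0 = none := e.hres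
      rw [h1] at hc
      have h2 : e.t0 ∉ e.bs := by
        intro hmem
        have := (e.hbs _ hmem).2.1
        omega
      rw [if_neg h2] at hc
      exact absurd hc (by simp)
    | j' + 1 =>
      rw [rowLen_addCol, if_pos Q.rows_pos] at hj
      cases hres : Q.res (Q.top j') with
      | some c' =>
        rw [hres] at hc
        have hcc : c = c' + 1 := by simpa using hc.symm
        subst hcc
        have := Q.compat j' c' (by omega) hres
        omega
      | none =>
        rw [hres] at hc
        by_cases hbs : Q.top j' ∈ e.bs
        · rw [if_pos hbs] at hc
          have hcc : c = 0 := by simpa using hc.symm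
          omega
        · rw [if_neg hbs] at hc
          exact absurd hc (by simp)

lemma Wbwd_full {m : ℕ} (Q : PTD m) (e : ExtD Q) :
    (Wbwd Q e).shape.colLen 0 = (Wbwd Q e).rows := colLen_addCol _ _

lemma sigmaExt {m : ℕ} {x y : Σ Q : PTD m, ExtD Q} (h1 : x.1 = y.1)
    (h2 : x.2.t0 = y.2.t0) (h3 : x.2.bs = y.2.bs) : x = y := by
  obtain ⟨Q, e⟩ := x
  obtain ⟨Q', e'⟩ := y
  dsimp only at h1
  subst h1
  dsimp only at h2 h3
  rw [extDExt h2 h3]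

def EW (m : ℕ) : {P : PTD (m + 1) // P.shape.colLen 0 = P.rows} ≃ (Σ Q : PTD m, ExtD Q) where
  toFun P := ⟨Wfwd P.1 P.2, WfwdExt P.1 P.2⟩
  invFun σ := ⟨Wbwd σ.1 σ.2, Wbwd_full σ.1 σ.2⟩
  left_inv := by
    rintro ⟨P, hP⟩
    apply Subtype.ext
    refine ptdExt rfl ?_ ?_ ?_
    · show addCol P.rows (strip P.shape) = P.shape
      rw [← hP]
      exact addCol_strip P.shape
    · funext j
      show (match j with | 0 => P.top 0 | j' + 1 => P.top (j' + 1)) = P.top j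
      match j with
      | 0 => rfl
      | j' + 1 => rfl
    · funext i
      show (match resShift (P.res i) with
        | some c => some (c + 1)
        | none => if i ∈ (WfwdExt P hP).bs then some 0 else none) = P.res i
      have hbs : ∀ i, (i ∈ (WfwdExt P hP).bs) ↔ (i < P.rows ∧ P.res i = some 0) := by
        intro i
        show i ∈ (Finset.range P.rows).filter _ ↔ _
        rw [Finset.mem_filter, Finset.mem_range]
      cases hres : P.res i with
      | none =>
        rw [resShift_none]
        rw [if_neg (by rw [hbs]; simp [hres])]
      | some c =>
        match c with
        | 0 =>
          rw [resShift_some_zero]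
          rw [if_pos]
          rw [hbs, hres]
          have := P.res_mem i 0 hres
          exact ⟨lt_of_lt_of_le (mem_le_colLen_zero this.1) P.rows_ge, rfl⟩
        | c' + 1 =>
          rw [resShift_some_succ]
  right_inv := by
    rintro ⟨Q, e⟩
    refine sigmaExt ?_ ?_ ?_
    · show Wfwd (Wbwd Q e) (Wbwd_full Q e) = Q
      refine ptdExt rfl ?_ ?_ ?_
      · show strip (addCol Q.rows Q.shape) = Q.shape
        exact strip_addCol Q.rows_ge
      · funext j
        show (match j + 1 with | 0 => e.t0 | j' + 1 => Q.top j') = Q.top j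
        rfl
      · funext i
        show resShift (match Q.res i with
          | some c => some (c + 1)
          | none => if i ∈ e.bs then some 0 else none) = Q.res i
        cases hres : Q.res i with
        | some c => rfl
        | none =>
          by_cases hbs : i ∈ e.bs
          · rw [if_pos hbs]
            rfl
          · rw [if_neg hbs]
            rfl
    · rfl
    · show (Finset.range Q.rows).filter
          (fun i => (match Q.res i with
            | some c => some (c + 1)
            | none => if i ∈ e.bs then some 0 else none) = some 0) = e.bs
      ext i
      rw [Finset.mem_filter, Finset.mem_range]
      constructor
      · rintro ⟨hir, heq⟩
        cases hres : Q.res i with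
        | some c => rw [hres] at heq; simp at heq
        | none =>
          rw [hres] at heq
          by_cases hbs : i ∈ e.bs
          · exact hbs
          · rw [if_neg hbs] at heq
            exact absurd heq (by simp)
      · intro hbs
        obtain ⟨h1, h2, h3⟩ := e.hbs i hbs
        exact ⟨h1, by rw [h3, if_pos hbs]⟩

/-! ### Finiteness -/

lemma ptd_rows_le {m : ℕ} (P : PTD m) : P.rows ≤ m := by
  have := P.half
  omega

lemma ptd_rowLen_le {m : ℕ} (P : PTD m) (i : ℕ) : P.shape.rowLen i ≤ m := by
  have h1 := P.shape.rowLen_anti 0 i (Nat.zero_le _)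
  have := P.half
  omega

lemma ptd_width_lt {m : ℕ} (P : PTD m) : P.shape.rowLen 0 < m := by
  have := P.half
  have := P.rows_pos
  omega

lemma ptd_top_le {m : ℕ} (P : PTD m) (j : ℕ) : P.top j ≤ m := by
  by_cases hj : j < P.shape.rowLen 0
  · have := P.top_lt_rows hj
    have := ptd_rows_le P
    omega
  · rw [P.top_pin j (by omega)]
    omega

def encRes (o : Option ℕ) : ℕ :=
  match o with
  | none => 0
  | some c => c + 1

lemma encRes_inj {o o' : Option ℕ} (h : encRes o = encRes o') : o = o' := by
  cases o <;> cases o' <;> simp [encRes] at h ⊢ <;> omega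

lemma ptd_encRes_le {m : ℕ} (P : PTD m) (i : ℕ) : encRes (P.res i) ≤ m := by
  cases hres : P.res i with
  | none => simp [encRes]
  | some c =>
    have h1 := (P.res_mem i c hres).1
    have h2 := mem_le_rowLen_zero h1
    have := ptd_width_lt P
    simp [encRes]
    omega

noncomputable def encPTD {m : ℕ} (P : PTD m) :
    Fin (m + 1) × (Fin m → Fin (m + 1)) × (Fin m → Fin (m + 1)) × (Fin m → Fin (m + 1)) :=
  (⟨min P.rows m, by omega⟩,
   fun i => ⟨min (P.shape.rowLen i.1) m, by omega⟩,
   fun j => ⟨min (P.top j.1) m, by omega⟩,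
   fun i => ⟨min (encRes (P.res i.1)) m, by omega⟩)

lemma encPTD_inj {m : ℕ} : Function.Injective (encPTD (m := m)) := by
  intro P P' h
  have h1 : min P.rows m = min P'.rows m := congrArg (fun z => z.1.1) h
  have h2 : ∀ i : Fin m, min (P.shape.rowLen i.1) m = min (P'.shape.rowLen i.1) m :=
    fun i => congrArg Fin.val (congrFun (congrArg (fun z => z.2.1) h) i)
  have h3 : ∀ j : Fin m, min (P.top j.1) m = min (P'.top j.1) m :=
    fun j => congrArg Fin.val (congrFun (congrArg (fun z => z.2.2.1) h) j)
  have h4 : ∀ i : Fin m, min (encRes (P.res i.1)) m = min (encRes (P'.res i.1)) m :=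
    fun i => congrArg Fin.val (congrFun (congrArg (fun z => z.2.2.2) h) i)
  have hrows : P.rows = P'.rows := by
    have := ptd_rows_le P
    have := ptd_rows_le P'
    omega
  refine ptdExt hrows ?_ ?_ ?_
  · apply yd_ext
    rintro ⟨i, j⟩
    rw [YoungDiagram.mem_iff_lt_rowLen, YoungDiagram.mem_iff_lt_rowLen]
    have hRL : P.shape.rowLen i = P'.shape.rowLen i := by
      by_cases hi : i < m
      · have heq : min (P.shape.rowLen i) m = min (P'.shape.rowLen i) m := h2 ⟨i, hi⟩
        have := ptd_rowLen_le P i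
        have := ptd_rowLen_le P' i
        omega
      · have e1 : P.shape.rowLen i = 0 :=
          rowLen_zero_of_colLen_le (by have := P.rows_ge; have := ptd_rows_le P; omega)
        have e2 : P'.shape.rowLen i = 0 :=
          rowLen_zero_of_colLen_le (by have := P'.rows_ge; have := ptd_rows_le P'; omega)
        rw [e1, e2]
    rw [hRL]
  · funext j
    by_cases hj : j < m
    · have heq : min (P.top j) m = min (P'.top j) m := h3 ⟨j, hj⟩
      have := ptd_top_le P j
      have := ptd_top_le P' j
      omega
    · rw [P.top_pin j (by have := ptd_width_lt P; omega),
        P'.top_pin j (by have := ptd_width_lt P'; omega)]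
  · funext i
    by_cases hi : i < m
    · have heq : min (encRes (P.res i)) m = min (encRes (P'.res i)) m := h4 ⟨i, hi⟩
      have := ptd_encRes_le P i
      have := ptd_encRes_le P' i
      apply encRes_inj
      omega
    · rw [P.res_none_of_rows_le (by have := ptd_rows_le P; omega),
        P'.res_none_of_rows_le (by have := ptd_rows_le P'; omega)]

instance {m : ℕ} : Finite (PTD m) := Finite.of_injective _ (encPTD_inj (m := m))

noncomputable instance {m : ℕ} : Fintype (PTD m) := Fintype.ofFinite _

def encExtD {m : ℕ} {Q : PTD m} (e : ExtD Q) : Fin (Q.rows + 1) × (Fin Q.rows → Bool) :=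
  (⟨min e.t0 Q.rows, by omega⟩, fun i => decide (i.1 ∈ e.bs))

lemma encExtD_inj {m : ℕ} {Q : PTD m} : Function.Injective (encExtD (Q := Q)) := by
  intro e e' h
  have h1 : min e.t0 Q.rows = min e'.t0 Q.rows := congrArg (fun z => z.1.1) h
  have h2 : ∀ i : Fin Q.rows, decide (i.1 ∈ e.bs) = decide (i.1 ∈ e'.bs) :=
    fun i => congrFun (congrArg (fun z => z.2) h) i
  refine extDExt ?_ ?_
  · have := e.ht0
    have := e'.ht0
    omega
  · ext i
    by_cases hi : i < Q.rows
    · have heq : decide (i ∈ e.bs) = decide (i ∈ e'.bs) := h2 ⟨i, hi⟩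
      simpa using heq
    · constructor
      · intro hmem
        exact absurd (e.hbs i hmem).1 hi
      · intro hmem
        exact absurd (e'.hbs i hmem).1 hi

instance {m : ℕ} {Q : PTD m} : Finite (ExtD Q) := Finite.of_injective _ (encExtD_inj (Q := Q))

noncomputable instance {m : ℕ} (Q : PTD m) : Fintype (ExtD Q) := Fintype.ofFinite _

/-! ### The unique PTD of size 1 -/

def ptdOne : PTD 1 where
  rows := 1
  rows_pos := by omega
  shape := ⊥
  rows_ge := by
    have : (⊥ : YoungDiagram).colLen 0 = 0 :=
      colLen_eq_of_iff fun i => by simp [YoungDiagram.notMem_bot]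
    omega
  half := by
    have : (⊥ : YoungDiagram).rowLen 0 = 0 :=
      rowLen_eq_of_iff fun j => by simp [YoungDiagram.notMem_bot]
    omega
  top := fun _ => 0
  res := fun _ => none
  top_mem := by
    intro j hj
    have : (⊥ : YoungDiagram).rowLen 0 = 0 :=
      rowLen_eq_of_iff fun j => by simp [YoungDiagram.notMem_bot]
    omega
  top_pin := fun _ _ => rfl
  res_mem := by intro i c hc; simp at hc
  compat := by intro j c hj hc; simp at hc

instance : Unique (PTD 1) where
  default := ptdOne
  uniq := by
    intro P
    have hw : P.shape.rowLen 0 = 0 := by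
      have := P.half
      have := P.rows_pos
      omega
    have hshape : P.shape = ⊥ := by
      apply yd_ext
      rintro ⟨i, j⟩
      simp only [YoungDiagram.notMem_bot, iff_false]
      intro hmem
      have := mem_le_rowLen_zero hmem
      omega
    have hcl : P.shape.colLen 0 = 0 := by
      rw [hshape]
      exact colLen_eq_of_iff fun i => by simp [YoungDiagram.notMem_bot]
    refine ptdExt ?_ ?_ ?_ ?_
    · show P.rows = 1
      have := P.half
      have := P.rows_pos
      omega
    · rw [hshape]; rfl
    · funext j
      exact P.top_pin j (by omega)
    · funext i
      exact P.res_none_of_ge (by omega)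

/-! ### Counting -/

def unresF {m : ℕ} (Q : PTD m) : Finset ℕ :=
  (Finset.range Q.rows).filter fun i => Q.res i = none

noncomputable def Ufun {m : ℕ} (Q : PTD m) : ℕ := (unresF Q).card

lemma mem_unresF {m : ℕ} {Q : PTD m} {i : ℕ} :
    i ∈ unresF Q ↔ i < Q.rows ∧ Q.res i = none := by
  simp [unresF]

def belowF {m : ℕ} (Q : PTD m) (t0 : ℕ) : Finset ℕ := (unresF Q).filter fun i => t0 < i

lemma mem_belowF {m : ℕ} {Q : PTD m} {t0 i : ℕ} :
    i ∈ belowF Q t0 ↔ (i < Q.rows ∧ Q.res i = none) ∧ t0 < i := by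
  simp [belowF, mem_unresF]

lemma unresF_Sbwd {m : ℕ} (Q : PTD m) : unresF (Sbwd Q) = insert Q.rows (unresF Q) := by
  show (Finset.range (Q.rows + 1)).filter (fun i => Q.res i = none) = _
  rw [Finset.range_add_one, Finset.filter_insert, if_pos (Q.res_none_of_rows_le (le_refl _))]
  rfl

lemma Ufun_Sbwd {m : ℕ} (Q : PTD m) : Ufun (Sbwd Q) = Ufun Q + 1 := by
  rw [Ufun, unresF_Sbwd, Finset.card_insert_of_notMem (by simp [mem_unresF])]
  rfl

lemma Wbwd_res_none_iff {m : ℕ} (Q : PTD m) (e : ExtD Q) (i : ℕ) :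
    (Wbwd Q e).res i = none ↔ (Q.res i = none ∧ i ∉ e.bs) := by
  show (match Q.res i with
    | some c => some (c + 1)
    | none => if i ∈ e.bs then some 0 else none) = none ↔ _
  cases hres : Q.res i with
  | some c => simp
  | none =>
    by_cases hbs : i ∈ e.bs
    · rw [if_pos hbs]
      simp [hbs]
    · rw [if_neg hbs]
      simp [hbs]

lemma unresF_Wbwd {m : ℕ} (Q : PTD m) (e : ExtD Q) : unresF (Wbwd Q e) = unresF Q \ e.bs := by
  ext i
  rw [mem_unresF, Finset.mem_sdiff, mem_unresF]
  rw [Wbwd_res_none_iff]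
  show i < Q.rows ∧ _ ↔ _
  tauto

lemma Ufun_Wbwd {m : ℕ} (Q : PTD m) (e : ExtD Q) :
    Ufun (Wbwd Q e) = ((unresF Q).filter (fun i => i ≤ e.t0)).card +
      (belowF Q e.t0 \ e.bs).card := by
  rw [Ufun, unresF_Wbwd]
  have hsplit : unresF Q \ e.bs =
      ((unresF Q).filter (fun i => i ≤ e.t0)) ∪ (belowF Q e.t0 \ e.bs) := by
    ext i
    simp only [Finset.mem_sdiff, Finset.mem_union, Finset.mem_filter, mem_belowF, mem_unresF]
    constructor
    · rintro ⟨hu, hbs⟩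
      rcases Nat.lt_or_ge e.t0 i with h | h
      · exact Or.inr ⟨⟨hu, h⟩, hbs⟩
      · exact Or.inl ⟨hu, h⟩
    · rintro (⟨hu, hle⟩ | ⟨⟨hu, hlt⟩, hbs⟩)
      · refine ⟨hu, ?_⟩
        intro hmem
        have := (e.hbs i hmem).2.1
        omega
      · exact ⟨hu, hbs⟩
  rw [hsplit, Finset.card_union_of_disjoint]
  rw [Finset.disjoint_left]
  intro i hi hmem
  rw [Finset.mem_filter] at hi
  rw [Finset.mem_sdiff, mem_belowF] at hmem
  omega

noncomputable def extEquiv {m : ℕ} (Q : PTD m) :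
    ExtD Q ≃ Σ t : {t // t ∈ unresF Q}, {s // s ∈ (belowF Q t.1).powerset} where
  toFun e := ⟨⟨e.t0, mem_unresF.2 ⟨e.ht0, e.hres⟩⟩,
    ⟨e.bs, Finset.mem_powerset.2 (fun i hi =>
      mem_belowF.2 ⟨⟨(e.hbs i hi).1, (e.hbs i hi).2.2⟩, (e.hbs i hi).2.1⟩)⟩⟩
  invFun σ :=
    { t0 := σ.1.1
      ht0 := (mem_unresF.1 σ.1.2).1
      hres := (mem_unresF.1 σ.1.2).2
      bs := σ.2.1
      hbs := fun i hi => by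
        have h := mem_belowF.1 (Finset.mem_powerset.1 σ.2.2 hi)
        exact ⟨h.1.1, h.2, h.1.2⟩ }
  left_inv e := extDExt rfl rfl
  right_inv σ := by
    obtain ⟨⟨t, ht⟩, ⟨s, hs⟩⟩ := σ
    rfl

lemma powSum (B : Finset ℕ) (x : ℕ) :
    ∑ bs ∈ B.powerset, x ^ ((B \ bs).card) = (x + 1) ^ B.card := by
  rw [add_comm x 1]
  calc ∑ bs ∈ B.powerset, x ^ ((B \ bs).card)
      = ∑ bs ∈ B.powerset, (∏ _i ∈ bs, 1) * ∏ _i ∈ B \ bs, x := by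
        apply Finset.sum_congr rfl
        intro bs _
        rw [Finset.prod_const, Finset.prod_const, one_pow, one_mul]
    _ = ∏ _i ∈ B, (1 + x) := (Finset.prod_add _ _ _).symm
    _ = (1 + x) ^ B.card := Finset.prod_const _

lemma keyLemma : ∀ (N : ℕ) (S : Finset ℕ), S.card = N → ∀ x : ℕ,
    (∑ t ∈ S, x ^ ((S.filter (fun i => i ≤ t)).card) *
      (x + 1) ^ ((S.filter (fun i => t < i)).card)) + x ^ (S.card + 1)
      = x * (x + 1) ^ S.card := by
  intro N
  induction N with
  | zero =>
    intro S hS x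
    rw [Finset.card_eq_zero] at hS
    subst hS
    simp
  | succ N ih =>
    intro S hS x
    have hne : S.Nonempty := by
      rw [← Finset.card_pos]
      omega
    set M := S.max' hne with hM
    have hMS : M ∈ S := S.max'_mem hne
    have hcard' : (S.erase M).card = N := by
      rw [Finset.card_erase_of_mem hMS]
      omega
    have hfM1 : S.filter (fun i => i ≤ M) = S :=
      Finset.filter_true_of_mem (fun i hi => S.le_max' i hi)
    have hfM2 : S.filter (fun i => M < i) = ∅ :=
      Finset.filter_false_of_mem (fun i hi => by have := S.le_max' i hi; omega)
    have hterm : ∀ t ∈ S.erase M,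
        x ^ ((S.filter (fun i => i ≤ t)).card) * (x + 1) ^ ((S.filter (fun i => t < i)).card)
        = (x + 1) * (x ^ (((S.erase M).filter (fun i => i ≤ t)).card) *
            (x + 1) ^ (((S.erase M).filter (fun i => t < i)).card)) := by
      intro t ht
      rw [Finset.mem_erase] at ht
      have htM : t < M := by
        have := S.le_max' t ht.2
        omega
      have hA : S.filter (fun i => i ≤ t) = (S.erase M).filter (fun i => i ≤ t) := by
        ext i
        simp only [Finset.mem_filter, Finset.mem_erase]
        constructor
        · rintro ⟨hi, hle⟩
          exact ⟨⟨fun hc => by omega, hi⟩, hle⟩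
        · rintro ⟨⟨_, hi⟩, hle⟩
          exact ⟨hi, hle⟩
      have hB : S.filter (fun i => t < i) = insert M ((S.erase M).filter (fun i => t < i)) := by
        ext i
        simp only [Finset.mem_filter, Finset.mem_erase, Finset.mem_insert]
        constructor
        · rintro ⟨hi, hlt⟩
          by_cases hiM : i = M
          · exact Or.inl hiM
          · exact Or.inr ⟨⟨hiM, hi⟩, hlt⟩
        · rintro (rfl | ⟨⟨_, hi⟩, hlt⟩)
          · exact ⟨hMS, htM⟩
          · exact ⟨hi, hlt⟩
      have hBcard : (S.filter (fun i => t < i)).card =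
          ((S.erase M).filter (fun i => t < i)).card + 1 := by
        rw [hB, Finset.card_insert_of_notMem (by simp)]
      rw [hA, hBcard, pow_succ]
      ring
    have hsum : (∑ t ∈ S, x ^ ((S.filter (fun i => i ≤ t)).card) *
        (x + 1) ^ ((S.filter (fun i => t < i)).card)) =
        (x + 1) * (∑ t ∈ S.erase M, x ^ (((S.erase M).filter (fun i => i ≤ t)).card) *
          (x + 1) ^ (((S.erase M).filter (fun i => t < i)).card)) + x ^ S.card := by
      rw [← Finset.sum_erase_add S _ hMS]
      rw [Finset.sum_congr rfl hterm, ← Finset.mul_sum]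
      rw [hfM1, hfM2]
      simp
    have hih := ih (S.erase M) hcard' x
    rw [hcard'] at hih
    set Ssum := ∑ t ∈ S.erase M, x ^ (((S.erase M).filter (fun i => i ≤ t)).card) *
      (x + 1) ^ (((S.erase M).filter (fun i => t < i)).card) with hSsum
    have hmul : (x + 1) * Ssum + (x + 1) * x ^ (N + 1) = (x + 1) * (x * (x + 1) ^ N) := by
      rw [← Nat.mul_add, hih]
    have e1 : (x + 1) * x ^ (N + 1) = x ^ (N + 2) + x ^ (N + 1) := by ring
    have e2 : (x + 1) * (x * (x + 1) ^ N) = x * (x + 1) ^ (N + 1) := by ring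
    rw [hsum, hS]
    rw [e1, e2] at hmul
    rw [show N + 1 + 1 = N + 2 from rfl]
    omega

lemma ext_sum {m : ℕ} (Q : PTD m) (x : ℕ) :
    (∑ e : ExtD Q, x ^ Ufun (Wbwd Q e)) + x ^ (Ufun Q + 1) = x * (x + 1) ^ Ufun Q := by
  classical
  have step1 : (∑ e : ExtD Q, x ^ Ufun (Wbwd Q e)) =
      ∑ t0 ∈ unresF Q, x ^ (((unresF Q).filter (fun i => i ≤ t0)).card) *
        (x + 1) ^ (((unresF Q).filter (fun i => t0 < i)).card) := by
    have e1 : (∑ e : ExtD Q, x ^ Ufun (Wbwd Q e)) =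
        ∑ σ : (Σ t : {t // t ∈ unresF Q}, {s // s ∈ (belowF Q t.1).powerset}),
          x ^ Ufun (Wbwd Q ((extEquiv Q).symm σ)) := by
      rw [← Equiv.sum_comp (extEquiv Q)
        (fun σ => x ^ Ufun (Wbwd Q ((extEquiv Q).symm σ)))]
      apply Finset.sum_congr rfl
      intro e _
      rw [Equiv.symm_apply_apply]
    rw [e1, ← Finset.univ_sigma_univ, Finset.sum_sigma]
    have e2 : ∀ t : {t // t ∈ unresF Q},
        (∑ s : {s // s ∈ (belowF Q t.1).powerset},
          x ^ Ufun (Wbwd Q ((extEquiv Q).symm ⟨t, s⟩))) =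
        x ^ (((unresF Q).filter (fun i => i ≤ t.1)).card) *
          (x + 1) ^ (((unresF Q).filter (fun i => t.1 < i)).card) := by
      intro t
      have e3 : ∀ s : {s // s ∈ (belowF Q t.1).powerset},
          x ^ Ufun (Wbwd Q ((extEquiv Q).symm ⟨t, s⟩)) =
          x ^ (((unresF Q).filter (fun i => i ≤ t.1)).card) *
            x ^ ((belowF Q t.1 \ s.1).card) := by
        intro s
        rw [Ufun_Wbwd, pow_add]
        rfl
      rw [Finset.sum_congr rfl (fun s _ => e3 s)]
      rw [← Finset.mul_sum]
      congr 1
      have e4 : (∑ s : {s // s ∈ (belowF Q t.1).powerset},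
          x ^ ((belowF Q t.1 \ s.1).card)) =
          ∑ bs ∈ (belowF Q t.1).powerset, x ^ ((belowF Q t.1 \ bs).card) :=
        Finset.sum_coe_sort ((belowF Q t.1).powerset)
          (fun bs => x ^ ((belowF Q t.1 \ bs).card))
      rw [e4, powSum]
      rfl
    rw [Finset.sum_congr rfl (fun t _ => e2 t)]
    exact Finset.sum_coe_sort (unresF Q) (fun t0 => x ^ (((unresF Q).filter (fun i => i ≤ t0)).card) *
      (x + 1) ^ (((unresF Q).filter (fun i => t0 < i)).card))
  rw [step1]
  exact keyLemma (unresF Q).card (unresF Q) rfl x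

noncomputable def Vsum (m x : ℕ) : ℕ := ∑ Q : PTD m, x ^ Ufun Q

lemma Vsum_rec {m : ℕ} (hm : 1 ≤ m) (x : ℕ) : Vsum (m + 1) x = x * Vsum m (x + 1) := by
  classical
  have hsplit := Finset.sum_filter_add_sum_filter_not Finset.univ
    (fun P : PTD (m + 1) => P.shape.colLen 0 < P.rows) (fun P => x ^ Ufun P)
  have hS : (∑ P ∈ Finset.univ.filter (fun P : PTD (m + 1) => P.shape.colLen 0 < P.rows),
      x ^ Ufun P) = ∑ Q : PTD m, x ^ (Ufun Q + 1) := by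
    rw [Finset.sum_subtype (p := fun P : PTD (m + 1) => P.shape.colLen 0 < P.rows)
      (Finset.univ.filter (fun P : PTD (m + 1) => P.shape.colLen 0 < P.rows))
      (fun P => by simp) (fun P => x ^ Ufun P)]
    rw [← Equiv.sum_comp (ES m hm).symm
      (fun P : {P : PTD (m + 1) // P.shape.colLen 0 < P.rows} => x ^ Ufun P.1)]
    apply Finset.sum_congr rfl
    intro Q _
    show x ^ Ufun (Sbwd Q) = x ^ (Ufun Q + 1)
    rw [Ufun_Sbwd]
  have hW : (∑ P ∈ Finset.univ.filter (fun P : PTD (m + 1) => ¬ P.shape.colLen 0 < P.rows),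
      x ^ Ufun P) = ∑ Q : PTD m, ∑ e : ExtD Q, x ^ Ufun (Wbwd Q e) := by
    rw [Finset.sum_subtype (p := fun P : PTD (m + 1) => P.shape.colLen 0 = P.rows)
      (Finset.univ.filter (fun P : PTD (m + 1) => ¬ P.shape.colLen 0 < P.rows))
      (fun P : PTD (m + 1) => by
        simp only [Finset.mem_filter, Finset.mem_univ, true_and]
        have := P.rows_ge
        constructor
        · intro h
          omega
        · intro h
          omega) (fun P => x ^ Ufun P)]
    rw [← Equiv.sum_comp (EW m).symm
      (fun P : {P : PTD (m + 1) // P.shape.colLen 0 = P.rows} => x ^ Ufun P.1)]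
    rw [← Finset.univ_sigma_univ, Finset.sum_sigma]
    rfl
  have htotal : Vsum (m + 1) x = (∑ Q : PTD m, x ^ (Ufun Q + 1)) +
      ∑ Q : PTD m, ∑ e : ExtD Q, x ^ Ufun (Wbwd Q e) := by
    rw [Vsum, ← hsplit, hS, hW]
  rw [htotal, ← Finset.sum_add_distrib]
  rw [Vsum, Finset.mul_sum]
  apply Finset.sum_congr rfl
  intro Q _
  rw [add_comm, ext_sum]

lemma Vsum_one (x : ℕ) : Vsum 1 x = x := by
  rw [Vsum]
  rw [Finset.univ_unique, Finset.sum_singleton]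
  have hU : Ufun (default : PTD 1) = 1 := by
    show (Finset.filter _ (Finset.range (ptdOne.rows))).card = 1
    show (Finset.filter (fun i => ptdOne.res i = none) (Finset.range 1)).card = 1
    have hfil : (Finset.filter (fun i => ptdOne.res i = none) (Finset.range 1)) =
        Finset.range 1 := Finset.filter_true_of_mem (fun i _ => rfl)
    rw [hfil]
    simp
  rw [hU, pow_one]

lemma Vsum_prod : ∀ m, 1 ≤ m → ∀ x, Vsum m x = ∏ i ∈ Finset.range m, (x + i) := by
  intro m
  induction m with
  | zero => omega
  | succ m ih =>
    intro _ x
    rcases Nat.eq_zero_or_pos m with rfl | hmp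
    · rw [Vsum_one]
      simp
    · rw [Vsum_rec hmp, ih hmp (x + 1), Finset.prod_range_succ']
      have hre : (∏ i ∈ Finset.range m, (x + 1 + i)) = ∏ i ∈ Finset.range m, (x + (i + 1)) :=
        Finset.prod_congr rfl (fun i _ => by ring)
      rw [hre, Nat.add_zero, mul_comm]

lemma prod_one_add : ∀ m : ℕ, (∏ i ∈ Finset.range m, (1 + i)) = m ! := by
  intro m
  induction m with
  | zero => simp
  | succ m ih =>
    rw [Finset.prod_range_succ, ih, Nat.factorial_succ]
    ring

lemma card_PTD {m : ℕ} (hm : 1 ≤ m) : Fintype.card (PTD m) = m ! := by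
  have h1 : Fintype.card (PTD m) = Vsum m 1 := by
    rw [Vsum]
    rw [Finset.sum_congr rfl (fun Q _ => one_pow (Ufun Q))]
    rw [Finset.sum_const, smul_eq_mul, mul_one, Finset.card_univ]
  rw [h1, Vsum_prod m hm 1, prod_one_add]

lemma ptdOne_south : ptdOne.shape.colLen 0 < ptdOne.rows := by
  show (⊥ : YoungDiagram).colLen 0 < 1
  have : (⊥ : YoungDiagram).colLen 0 = 0 :=
    colLen_eq_of_iff fun i => by simp [YoungDiagram.notMem_bot]
  omega

lemma count_south (n : ℕ) (hn : 1 ≤ n) :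
    (∑ D : PTD n, if D.shape.colLen 0 < D.rows then 1 else 0) = (n - 1)! := by
  obtain ⟨m, rfl⟩ : ∃ m, n = m + 1 := ⟨n - 1, by omega⟩
  rw [Finset.sum_boole, Nat.cast_id, ← Fintype.card_subtype]
  rcases Nat.eq_zero_or_pos m with rfl | hmp
  · haveI : Unique {P : PTD 1 // P.shape.colLen 0 < P.rows} :=
      { default := ⟨ptdOne, ptdOne_south⟩
        uniq := fun P => Subtype.ext (Unique.eq_default P.1) }
    rw [Fintype.card_unique]
    have : (0 + 1 - 1) = 0 := rfl
    rw [this]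
    rfl
  · rw [Fintype.card_congr (ES m hmp), card_PTD hmp]
    have : (m + 1 - 1) = m := by omega
    rw [this]

end CornerAux
/-- The total number of corners over all tree-like tableaux of size `n` equals the
total number of corners over all permutation tableaux of size `n` plus `(n - 1) !`. -/
theorem corners_treeLike_eq_permTableau (n : ℕ) (hn : 1 ≤ n) :
    (∑ᶠ T : TreeLike n, cornerCount T.shape) =
      (∑ᶠ P : PermTableau n, cornerCount P.shape) + (n - 1) ! := by
  classical
  have h1 : (∑ᶠ T : TreeLike n, cornerCount T.shape) =
      ∑ᶠ D : CornerAux.PTD n, cornerCount (CornerAux.addCol D.rows D.shape) := by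
    rw [← finsum_comp_equiv (CornerAux.equivTLT n).symm
      (f := fun T : TreeLike n => cornerCount T.shape)]
    exact finsum_congr fun D => rfl
  have h2 : ∀ D : CornerAux.PTD n, cornerCount (CornerAux.addCol D.rows D.shape) =
      cornerCount D.shape + (if D.shape.colLen 0 < D.rows then 1 else 0) :=
    fun D => CornerAux.cornerCount_addCol D.rows_ge D.rows_pos
  have h3 : (∑ᶠ P : PermTableau n, cornerCount P.shape) =
      ∑ᶠ D : CornerAux.PTD n, cornerCount D.shape := by
    rw [← finsum_comp_equiv (CornerAux.equivPT n).symm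
      (f := fun P : PermTableau n => cornerCount P.shape)]
    exact finsum_congr fun D => rfl
  rw [h1, finsum_congr h2, h3]
  rw [finsum_eq_sum_of_fintype, finsum_eq_sum_of_fintype, Finset.sum_add_distrib]
  rw [CornerAux.count_south n hn]
end

section
/- For type-B permutation tableaux, the number of extensions of a tableau B of size n−1 to a tableau of size n equals 2^{U_{n−1}(B)+1}, where U_{n−1}(B) is the number of unrestricted rows of B; consequently, |B_n| = Σ_{B ∈ B_{n−1}} 2^{U_{n−1}(B)+1}. -/
open scoped BigOperators
open Nat

namespace BAux

open YoungDiagram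

/-- Delete the first column of a Young diagram. -/
def shiftLeft (μ : YoungDiagram) : YoungDiagram where
  cells := (μ.cells.filter (fun c => 1 ≤ c.2)).image (fun c => (c.1, c.2 - 1))
  isLowerSet := by
    intro ⟨i', j'⟩ ⟨i, j⟩ hle hmem
    rw [Prod.mk_le_mk] at hle
    simp only [Finset.coe_image, Finset.coe_filter, Set.mem_image, Set.mem_setOf_eq,
      YoungDiagram.mem_cells] at hmem ⊢
    obtain ⟨⟨a, b⟩, ⟨hab, hb⟩, heq⟩ := hmem
    injection heq with h1 h2
    simp only at hb h1 h2
    refine ⟨(i, j + 1), ⟨μ.isLowerSet ?_ hab, by simp⟩, by exact congrArg (Prod.mk i) rfl⟩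
    exact Prod.mk_le_mk.mpr ⟨by omega, by omega⟩

theorem mem_shiftLeft {μ : YoungDiagram} {i j : ℕ} :
    (i, j) ∈ shiftLeft μ ↔ (i, j + 1) ∈ μ := by
  constructor
  · intro h
    change (i, j) ∈ (Finset.image (fun c : ℕ × ℕ => (c.1, c.2 - 1)) (μ.cells.filter (fun c => 1 ≤ c.2))) at h
    simp only [Finset.mem_image, Finset.mem_filter,
      YoungDiagram.mem_cells] at h
    obtain ⟨⟨a, b⟩, ⟨hab, hb⟩, heq⟩ := h
    injection heq with h1 h2
    simp only at hb h1 h2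
    have : b = j + 1 := by omega
    rw [← h1, ← this]
    exact hab
  · intro h
    change (i, j) ∈ (Finset.image (fun c : ℕ × ℕ => (c.1, c.2 - 1)) (μ.cells.filter (fun c => 1 ≤ c.2)))
    simp only [Finset.mem_image, Finset.mem_filter,
      YoungDiagram.mem_cells]
    exact ⟨(i, j + 1), ⟨h, by simp⟩, by exact congrArg (Prod.mk i) rfl⟩

theorem shiftLeft_colLen (μ : YoungDiagram) : (shiftLeft μ).colLen 0 = μ.colLen 1 := by
  have key : ∀ i, i < (shiftLeft μ).colLen 0 ↔ i < μ.colLen 1 := by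
    intro i
    rw [← YoungDiagram.mem_iff_lt_colLen, ← YoungDiagram.mem_iff_lt_colLen, mem_shiftLeft]
  have h1 := key ((shiftLeft μ).colLen 0)
  have h2 := key (μ.colLen 1)
  omega

theorem shiftLeft_rowLen (μ : YoungDiagram) (i : ℕ) :
    (shiftLeft μ).rowLen i = μ.rowLen i - 1 := by
  have key : ∀ j, j < (shiftLeft μ).rowLen i ↔ j + 1 < μ.rowLen i := by
    intro j
    rw [← YoungDiagram.mem_iff_lt_rowLen, ← YoungDiagram.mem_iff_lt_rowLen, mem_shiftLeft]
  have h1 := key ((shiftLeft μ).rowLen i)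
  have h2 := key (μ.rowLen i - 1)
  have h3 := key (μ.rowLen i)
  omega

/-- Add a full first column of height `m` to a Young diagram whose first column
has height at most `m`. -/
def extShape (μ : YoungDiagram) (m : ℕ) (h : μ.colLen 0 ≤ m) : YoungDiagram where
  cells := (Finset.range m ×ˢ {0}) ∪ μ.cells.image (fun c => (c.1, c.2 + 1))
  isLowerSet := by
    intro ⟨i', j'⟩ ⟨i, j⟩ hle hmem
    rw [Prod.mk_le_mk] at hle
    obtain ⟨hi, hj⟩ := hle
    simp only [Finset.coe_union, Finset.coe_product, Set.mem_union, Set.mem_prod,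
      Finset.coe_image, Set.mem_image, Finset.mem_coe, Finset.mem_range,
      Finset.mem_singleton, YoungDiagram.mem_cells, Finset.coe_singleton,
      Set.mem_singleton_iff] at hmem ⊢
    rcases hmem with ⟨him, hj0⟩ | ⟨⟨a, b⟩, hab, heq⟩
    · left; omega
    · injection heq with h1 h2
      simp only at h1 h2
      have ha : a < μ.colLen 0 := YoungDiagram.mem_iff_lt_colLen.mp
        (μ.isLowerSet (Prod.mk_le_mk.mpr ⟨le_refl a, Nat.zero_le b⟩) hab)
      rcases Nat.eq_zero_or_pos j with hz | hpos
      · left; omega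
      · right
        refine ⟨(i, j - 1), μ.isLowerSet (Prod.mk_le_mk.mpr ⟨by omega, by omega⟩) hab, ?_⟩
        have hj' : j - 1 + 1 = j := by omega
        exact congrArg (Prod.mk i) hj'

theorem mem_extShape {μ : YoungDiagram} {m : ℕ} {h : μ.colLen 0 ≤ m} {i j : ℕ} :
    (i, j) ∈ extShape μ m h ↔ (j = 0 ∧ i < m) ∨ (1 ≤ j ∧ (i, j - 1) ∈ μ) := by
  change (i, j) ∈ ((Finset.range m ×ˢ {0}) ∪ μ.cells.image (fun c : ℕ × ℕ => (c.1, c.2 + 1))) ↔ _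
  simp only [Finset.mem_union, Finset.mem_product,
    Finset.mem_range, Finset.mem_singleton, Finset.mem_image, YoungDiagram.mem_cells]
  constructor
  · rintro (⟨him, hj⟩ | ⟨⟨a, b⟩, hab, heq⟩)
    · left; exact ⟨hj, him⟩
    · injection heq with h1 h2
      simp only at h1 h2
      right
      refine ⟨by omega, ?_⟩
      have : (i, j - 1) = (a, b) := by
        refine congrArg₂ Prod.mk h1.symm ?_
        omega
      rw [this]; exact hab
  · rintro (⟨rfl, him⟩ | ⟨hj, hmem⟩)
    · left; exact ⟨him, rfl⟩
    · right
      refine ⟨(i, j - 1), hmem, ?_⟩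
      have hj' : j - 1 + 1 = j := by omega
      exact congrArg (Prod.mk i) hj'

end BAux
namespace BAux

theorem bt_ext {n : ℕ} {B C : BTableau n} (h1 : B.cols = C.cols) (h2 : B.shape = C.shape)
    (h3 : B.filling = C.filling) : B = C := by
  cases B; cases C
  simp only at h1 h2 h3
  subst h1; subst h2; subst h3
  rfl

theorem bcell_shift {cols : ℕ} (hc : 1 ≤ cols) {μ : YoungDiagram} {i j : ℕ} :
    BCell (cols - 1) (shiftLeft μ) (i, j) ↔ BCell cols μ (i + 1, j + 1) := by
  simp only [BCell, mem_shiftLeft]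
  constructor
  · rintro (⟨h1, h2⟩ | ⟨h1, h2⟩)
    · left; omega
    · right
      refine ⟨by omega, ?_⟩
      have he : i + 1 - cols = i - (cols - 1) := by omega
      rw [he]
      exact h2
  · rintro (⟨h1, h2⟩ | ⟨h1, h2⟩)
    · left; omega
    · right
      refine ⟨by omega, ?_⟩
      have he : i - (cols - 1) = i + 1 - cols := by omega
      rw [he]
      exact h2

theorem bcell_ext_succ {cols m : ℕ} {μ : YoungDiagram} (h : μ.colLen 0 ≤ m) {i j : ℕ} :
    BCell (cols + 1) (extShape μ m h) (i + 1, j + 1) ↔ BCell cols μ (i, j) := by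
  simp only [BCell]
  constructor
  · rintro (⟨h1, h2⟩ | ⟨h1, h2⟩)
    · left; omega
    · right
      refine ⟨by omega, ?_⟩
      rcases (mem_extShape (h := h)).mp h2 with ⟨hz, _⟩ | ⟨_, hm⟩
      · omega
      · have he : i + 1 - (cols + 1) = i - cols := by omega
        have he2 : j + 1 - 1 = j := by omega
        rw [he, he2] at hm
        exact hm
  · rintro (⟨h1, h2⟩ | ⟨h1, h2⟩)
    · left; omega
    · right
      refine ⟨by omega, ?_⟩
      rw [mem_extShape]
      right
      refine ⟨by omega, ?_⟩
      have he : i + 1 - (cols + 1) = i - cols := by omega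
      have he2 : j + 1 - 1 = j := by omega
      rw [he, he2]
      exact h2

theorem bcell_ext_zero {cols m : ℕ} {μ : YoungDiagram} (h : μ.colLen 0 ≤ m) {i : ℕ} :
    BCell (cols + 1) (extShape μ m h) (i, 0) ↔ i < cols + 1 + m := by
  simp only [BCell]
  constructor
  · rintro (⟨h1, _⟩ | ⟨h1, h2⟩)
    · omega
    · rcases mem_extShape.mp h2 with ⟨_, hm⟩ | ⟨h3, _⟩ <;> omega
  · intro hi
    rcases Nat.lt_or_ge i (cols + 1) with hlt | hge
    · left; exact ⟨hlt, Nat.zero_le _⟩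
    · right; exact ⟨hge, mem_extShape.mpr (Or.inl ⟨rfl, by omega⟩)⟩

theorem bcell_ext_toprow {cols m : ℕ} {μ : YoungDiagram} (h : μ.colLen 0 ≤ m) {j : ℕ} :
    ¬ BCell (cols + 1) (extShape μ m h) (0, j + 1) := by
  simp only [BCell]
  rintro (⟨h1, h2⟩ | ⟨h1, _⟩) <;> omega

theorem extShape_colLen {μ : YoungDiagram} {m : ℕ} (h : μ.colLen 0 ≤ m) :
    (extShape μ m h).colLen 0 = m := by
  have key : ∀ i, i < (extShape μ m h).colLen 0 ↔ i < m := by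
    intro i
    rw [← YoungDiagram.mem_iff_lt_colLen, mem_extShape]
    constructor
    · rintro (⟨_, h2⟩ | ⟨h1, _⟩) <;> omega
    · intro hi; exact Or.inl ⟨rfl, hi⟩
  have h1 := key ((extShape μ m h).colLen 0)
  have h2 := key m
  omega

theorem extShape_rowLen_le {μ : YoungDiagram} {m : ℕ} (h : μ.colLen 0 ≤ m) (i : ℕ) :
    (extShape μ m h).rowLen i ≤ μ.rowLen i + 1 := by
  by_contra hcon
  push_neg at hcon
  have hmem : (i, μ.rowLen i + 1) ∈ extShape μ m h :=
    YoungDiagram.mem_iff_lt_rowLen.mpr hcon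
  rcases (mem_extShape (h := h)).mp hmem with ⟨hz, _⟩ | ⟨_, hm⟩
  · omega
  · have := YoungDiagram.mem_iff_lt_rowLen.mp hm
    omega

theorem colLen_zero_of_rowLen_zero {μ : YoungDiagram} (h : μ.rowLen 0 = 0) :
    μ.colLen 0 = 0 := by
  by_contra hcon
  have h0 : (0, 0) ∈ μ := YoungDiagram.mem_iff_lt_colLen.mpr (by omega)
  have := YoungDiagram.mem_iff_lt_rowLen.mp h0
  omega

theorem cols_pos {m : ℕ} (T : BTableau (m + 1))
    (h : ¬ (T.shape.colLen 0 + T.cols < m + 1)) : 1 ≤ T.cols := by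
  by_contra hcon
  have hc0 : T.cols = 0 := by omega
  have hw := T.width_le
  rw [hc0] at hw
  have := colLen_zero_of_rowLen_zero (Nat.le_zero.mp hw)
  omega

/-- The reduction map: delete the last border step. -/
def reduce {m : ℕ} (T : BTableau (m + 1)) : BTableau m :=
  if h : T.shape.colLen 0 + T.cols < m + 1 then
    { cols := T.cols
      cols_le := by have := T.rows_ge; omega
      shape := T.shape
      rows_ge := by omega
      width_le := T.width_le
      filling := T.filling
      support := T.support
      col_one := T.col_one
      avoid := T.avoid
      diag := T.diag }
  else
    { cols := T.cols - 1
      cols_le := by have := T.cols_le; omega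
      shape := shiftLeft T.shape
      rows_ge := by
        rw [shiftLeft_colLen]
        have h1 := T.shape.colLen_anti 0 1 (by omega)
        have h2 := T.rows_ge
        have h3 := T.cols_le
        have h4 := cols_pos T h
        omega
      width_le := by
        rw [shiftLeft_rowLen]
        have := T.width_le
        omega
      filling := fun c => T.filling (c.1 + 1, c.2 + 1)
      support := by
        intro ⟨i, j⟩ hc
        apply T.support
        intro hB
        exact hc ((bcell_shift (cols_pos T h)).mpr hB)
      col_one := by
        intro j hj
        obtain ⟨i, hi⟩ := T.col_one (j + 1) (by omega)
        have hipos : 1 ≤ i := by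
          by_contra hcon
          have hi0 : i = 0 := by omega
          rw [hi0] at hi
          have : T.filling (0, j + 1) = false := by
            apply T.support
            rintro (⟨_, h2⟩ | ⟨h1, _⟩)
            · omega
            · have := cols_pos T h; omega
          rw [this] at hi
          exact Bool.false_ne_true hi
        refine ⟨i - 1, ?_⟩
        simp only
        have he : i - 1 + 1 = i := by omega
        rw [he]
        exact hi
      avoid := by
        intro i j hB hf hex j' hj'
        simp only at hf ⊢
        obtain ⟨i', hi', hv⟩ := hex
        exact T.avoid (i + 1) (j + 1) ((bcell_shift (cols_pos T h)).mp hB) hf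
          ⟨i' + 1, by omega, hv⟩ (j' + 1) (by omega)
      diag := by
        intro i hi hfd j
        simp only at hfd ⊢
        exact T.diag (i + 1) (by omega) hfd (j + 1) }

end BAux
namespace BAux

/-- Extension of a tableau by adding an empty row at the bottom. -/
def extRow {m : ℕ} (B : BTableau m) : BTableau (m + 1) where
  cols := B.cols
  cols_le := by have := B.cols_le; omega
  shape := B.shape
  rows_ge := by have := B.rows_ge; have := B.cols_le; omega
  width_le := B.width_le
  filling := B.filling
  support := B.support
  col_one := B.col_one
  avoid := B.avoid
  diag := B.diag

theorem reduce_extRow {m : ℕ} (B : BTableau m) : reduce (extRow B) = B := by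
  have hbr : (extRow B).shape.colLen 0 + (extRow B).cols < m + 1 := by
    have h1 := B.rows_ge
    have h2 := B.cols_le
    simp only [extRow] at *
    omega
  rw [reduce, dif_pos hbr]
  exact bt_ext rfl rfl rfl

/-- Extension of a tableau by adding a full column on the left, with filling `g`. -/
def extCol {m : ℕ} (B : BTableau m) (g : ℕ → Bool) (hg1 : ∃ i, g i = true)
    (hg2 : ∀ i, g (i + 1) = true → i < m ∧ B.unres i) : BTableau (m + 1) where
  cols := B.cols + 1
  cols_le := by have := B.cols_le; omega
  shape := extShape B.shape (m - B.cols) B.rows_ge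
  rows_ge := by rw [extShape_colLen]; omega
  width_le := by
    have h1 := extShape_rowLen_le B.rows_ge 0
    have h2 := B.width_le
    omega
  filling := fun c => if c.2 = 0 then g c.1 else if c.1 = 0 then false
    else B.filling (c.1 - 1, c.2 - 1)
  support := by
    intro ⟨i, j⟩ hc
    match j, i with
    | 0, i =>
      simp only [if_pos rfl]
      rw [bcell_ext_zero B.rows_ge] at hc
      cases hgi : g i with
      | false => rfl
      | true =>
        exfalso
        match i, hgi with
        | 0, hgi => exact hc (by have := B.cols_le; omega)
        | i + 1, hgi =>
          have := (hg2 i hgi).1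
          have := B.cols_le
          omega
    | j + 1, 0 => simp
    | j + 1, i + 1 =>
      simp only [Nat.succ_ne_zero, if_false, Nat.add_sub_cancel]
      apply B.support
      intro hB
      exact hc ((bcell_ext_succ B.rows_ge).mpr hB)
  col_one := by
    intro j hj
    match j with
    | 0 =>
      obtain ⟨i, hi⟩ := hg1
      exact ⟨i, by simpa using hi⟩
    | j + 1 =>
      obtain ⟨i, hi⟩ := B.col_one j (by omega)
      exact ⟨i + 1, by simpa using hi⟩
  avoid := by
    intro i j hB hf hex j' hj'
    match j, hj' with
    | j + 1, hj' =>
      match i with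
      | 0 => exact absurd hB (bcell_ext_toprow B.rows_ge)
      | i + 1 =>
        simp only [Nat.succ_ne_zero, if_false, Nat.add_sub_cancel] at hf
        obtain ⟨a, ha, hav⟩ := hex
        match a, hav with
        | 0, hav => simp at hav
        | a + 1, hav =>
          simp only [Nat.succ_ne_zero, if_false, Nat.add_sub_cancel] at hav
          have hBc : BCell B.cols B.shape (i, j) := (bcell_ext_succ B.rows_ge).mp hB
          have hold := B.avoid i j hBc hf ⟨a, by omega, hav⟩
          match j', hj' with
          | 0, _ =>
            simp only [if_pos rfl]
            cases hgi : g (i + 1) with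
            | false => rfl
            | true =>
              exfalso
              have hunres := (hg2 i hgi).2
              have := hunres.2 j hBc hf a (by omega)
              rw [this] at hav
              exact Bool.false_ne_true hav
          | j' + 1, hj' =>
            simp only [Nat.succ_ne_zero, if_false, Nat.add_sub_cancel]
            exact hold j' (by omega)
  diag := by
    intro i hi hfd j
    match i with
    | 0 =>
      simp only [if_pos rfl] at hfd
      match j with
      | 0 => simpa using hfd
      | j + 1 => simp
    | i + 1 =>
      simp only [Nat.succ_ne_zero, if_false, Nat.add_sub_cancel] at hfd
      match j with
      | 0 =>
        simp only [if_pos rfl]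
        cases hgi : g (i + 1) with
        | false => rfl
        | true =>
          exfalso
          have := (hg2 i hgi).2.1 (by omega)
          rw [this] at hfd
          simp at hfd
      | j + 1 =>
        simp only [Nat.succ_ne_zero, if_false, Nat.add_sub_cancel]
        exact B.diag i (by omega) hfd j

end BAux
namespace BAux

theorem shiftLeft_extShape {μ : YoungDiagram} {m : ℕ} (h : μ.colLen 0 ≤ m) :
    shiftLeft (extShape μ m h) = μ := by
  apply YoungDiagram.ext
  apply Finset.ext
  intro ⟨i, j⟩
  rw [YoungDiagram.mem_cells, YoungDiagram.mem_cells, mem_shiftLeft, mem_extShape]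
  constructor
  · rintro (⟨h1, _⟩ | ⟨_, h2⟩)
    · omega
    · simpa using h2
  · intro hm
    right
    exact ⟨by omega, by simpa using hm⟩

theorem reduce_extCol {m : ℕ} (B : BTableau m) (g : ℕ → Bool) (hg1 : ∃ i, g i = true)
    (hg2 : ∀ i, g (i + 1) = true → i < m ∧ B.unres i) :
    reduce (extCol B g hg1 hg2) = B := by
  have hbr : ¬ ((extCol B g hg1 hg2).shape.colLen 0 + (extCol B g hg1 hg2).cols < m + 1) := by
    show ¬ ((extShape B.shape (m - B.cols) B.rows_ge).colLen 0 + (B.cols + 1) < m + 1)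
    rw [extShape_colLen]
    have := B.cols_le
    omega
  rw [reduce, dif_neg hbr]
  refine bt_ext rfl (shiftLeft_extShape B.rows_ge) ?_
  funext ⟨i, j⟩
  show (extCol B g hg1 hg2).filling (i + 1, j + 1) = B.filling (i, j)
  simp [extCol]

/-- Classification of the fiber of `reduce` over `B`. -/
theorem fiber_classify {m : ℕ} (B : BTableau m) (T : BTableau (m + 1))
    (h : reduce T = B) :
    T = extRow B ∨ ∃ (g : ℕ → Bool) (hg1 : ∃ i, g i = true)
      (hg2 : ∀ i, g (i + 1) = true → i < m ∧ B.unres i), T = extCol B g hg1 hg2 := by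
  by_cases hbr : T.shape.colLen 0 + T.cols < m + 1
  · left
    rw [reduce, dif_pos hbr] at h
    have hcols : T.cols = B.cols := congrArg BTableau.cols h
    have hshape : T.shape = B.shape := congrArg BTableau.shape h
    have hfill : T.filling = B.filling := congrArg BTableau.filling h
    exact bt_ext hcols hshape hfill
  · right
    rw [reduce, dif_neg hbr] at h
    have hc1 : 1 ≤ T.cols := cols_pos T hbr
    have hcols : T.cols - 1 = B.cols := congrArg BTableau.cols h
    have hshape : shiftLeft T.shape = B.shape := congrArg BTableau.shape h
    have hfill : (fun c : ℕ × ℕ => T.filling (c.1 + 1, c.2 + 1)) = B.filling :=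
      congrArg BTableau.filling h
    have hfill' : ∀ i j, B.filling (i, j) = T.filling (i + 1, j + 1) := by
      intro i j
      rw [← hfill]
    have hcols' : T.cols = B.cols + 1 := by omega
    -- the new-column filling
    set g : ℕ → Bool := fun i => T.filling (i, 0) with hg
    have hg1 : ∃ i, g i = true := T.col_one 0 (by omega)
    have hcolLen : T.shape.colLen 0 = m + 1 - T.cols := by
      have := T.rows_ge
      omega
    have hg2 : ∀ i, g (i + 1) = true → i < m ∧ B.unres i := by
      intro i hgi
      have hBc : BCell T.cols T.shape (i + 1, 0) := by
        by_contra hcon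
        rw [hg] at hgi
        simp only at hgi
        rw [T.support _ hcon] at hgi
        exact Bool.false_ne_true hgi
      have him : i < m := by
        have hBc' := hBc
        simp only [BCell] at hBc'
        rcases hBc' with ⟨h1, _⟩ | ⟨h1, h2⟩
        · have := T.cols_le; omega
        · have := YoungDiagram.mem_iff_lt_colLen.mp h2
          omega
      refine ⟨him, ?_, ?_⟩
      · -- diagonal entry is 1
        intro hiB
        by_contra hcon
        have hdiag : B.filling (i, i) = false := by
          cases hv : B.filling (i, i) with
          | false => rfl
          | true => exact absurd hv hcon
        rw [hfill' i i] at hdiag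
        have := T.diag (i + 1) (by omega) hdiag 0
        rw [hg] at hgi
        simp only at hgi
        rw [this] at hgi
        exact Bool.false_ne_true hgi
      · -- no restricted zero
        intro j hBj hfj i' hi'
        by_contra hcon
        have hv : B.filling (i', j) = true := by
          cases hv : B.filling (i', j) with
          | false => exact absurd hv hcon
          | true => rfl
        have hBT : BCell T.cols T.shape (i + 1, j + 1) :=
          (bcell_shift hc1).mp (by rw [hcols, hshape]; exact hBj)
        have := T.avoid (i + 1) (j + 1) hBT (by rw [← hfill' i j]; exact hfj)
          ⟨i' + 1, by omega, by rw [← hfill' i' j]; exact hv⟩ 0 (by omega)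
        rw [hg] at hgi
        simp only at hgi
        rw [this] at hgi
        exact Bool.false_ne_true hgi
    refine ⟨g, hg1, hg2, ?_⟩
    refine bt_ext ?_ ?_ ?_
    · exact hcols'
    · -- shape equality
      apply YoungDiagram.ext
      apply Finset.ext
      intro ⟨i, j⟩
      rw [YoungDiagram.mem_cells, YoungDiagram.mem_cells]
      show (i, j) ∈ T.shape ↔ (i, j) ∈ extShape B.shape (m - B.cols) B.rows_ge
      rw [mem_extShape]
      match j with
      | 0 =>
        rw [YoungDiagram.mem_iff_lt_colLen, hcolLen]
        constructor
        · intro hi; left; exact ⟨rfl, by omega⟩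
        · rintro (⟨_, hi⟩ | ⟨h1, _⟩)
          · omega
          · omega
      | j + 1 =>
        rw [← hshape]
        constructor
        · intro hm
          right
          refine ⟨by omega, ?_⟩
          simp only [Nat.add_sub_cancel]
          rw [mem_shiftLeft]
          exact hm
        · rintro (⟨h1, _⟩ | ⟨_, h2⟩)
          · omega
          · simp only [Nat.add_sub_cancel] at h2
            rw [mem_shiftLeft] at h2
            exact h2
    · -- filling equality
      funext ⟨i, j⟩
      show T.filling (i, j) = (extCol B g hg1 hg2).filling (i, j)
      match j, i with
      | 0, i => simp [extCol, hg]
      | j + 1, 0 =>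
        simp only [extCol, Nat.succ_ne_zero, if_false, if_pos rfl]
        apply T.support
        rintro (⟨_, h2⟩ | ⟨h1, _⟩) <;> omega
      | j + 1, i + 1 =>
        simp only [extCol, Nat.succ_ne_zero, if_false, Nat.add_sub_cancel]
        rw [hfill' i j]

end BAux
namespace BAux

theorem shape_lt {k : ℕ} (T : BTableau k) {i j : ℕ} (h : (i, j) ∈ T.shape) :
    i < k ∧ j < k := by
  have hi : i < T.shape.colLen j := YoungDiagram.mem_iff_lt_colLen.mp h
  have hj : j < T.shape.rowLen i := YoungDiagram.mem_iff_lt_rowLen.mp h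
  have h1 := T.shape.colLen_anti 0 j (by omega)
  have h2 := T.shape.rowLen_anti 0 i (by omega)
  have h3 := T.rows_ge
  have h4 := T.width_le
  have h5 := T.cols_le
  omega

theorem bcell_lt {k : ℕ} (T : BTableau k) {i j : ℕ} (h : BCell T.cols T.shape (i, j)) :
    i < k ∧ j < k := by
  have h5 := T.cols_le
  rcases h with ⟨h1, h2⟩ | ⟨h1, h2⟩
  · omega
  · have hi : i - T.cols < T.shape.colLen j := YoungDiagram.mem_iff_lt_colLen.mp h2
    have hj : j < T.shape.rowLen (i - T.cols) := YoungDiagram.mem_iff_lt_rowLen.mp h2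
    have hc1 := T.shape.colLen_anti 0 j (by omega)
    have hc2 := T.shape.rowLen_anti 0 (i - T.cols) (by omega)
    have h3 := T.rows_ge
    have h4 := T.width_le
    omega

instance btFinite (k : ℕ) : Finite (BTableau k) := by
  apply Finite.of_injective (f := fun T : BTableau k =>
    ((⟨T.cols, by have := T.cols_le; omega⟩ : Fin (k + 1)),
     (fun p : Fin k × Fin k => decide ((p.1.1, p.2.1) ∈ T.shape)),
     (fun p : Fin k × Fin k => T.filling (p.1.1, p.2.1))))
  intro T T' heq
  simp only [Prod.mk.injEq, Fin.mk.injEq] at heq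
  obtain ⟨h1, h2, h3⟩ := heq
  have hshape : T.shape = T'.shape := by
    apply YoungDiagram.ext
    apply Finset.ext
    intro ⟨i, j⟩
    rw [YoungDiagram.mem_cells, YoungDiagram.mem_cells]
    constructor
    · intro hm
      obtain ⟨hi, hj⟩ := shape_lt T hm
      have := congrFun h2 (⟨i, hi⟩, ⟨j, hj⟩)
      simp only [decide_eq_decide] at this
      exact this.mp hm
    · intro hm
      obtain ⟨hi, hj⟩ := shape_lt T' hm
      have := congrFun h2 (⟨i, hi⟩, ⟨j, hj⟩)
      simp only [decide_eq_decide] at this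
      exact this.mpr hm
  refine bt_ext h1 hshape ?_
  funext ⟨i, j⟩
  by_cases hb : i < k ∧ j < k
  · exact congrFun h3 (⟨i, hb.1⟩, ⟨j, hb.2⟩)
  · rw [T.support _ (fun hc => hb (bcell_lt T hc)),
      T'.support _ (fun hc => hb (bcell_lt T' hc))]

/-- The key counting lemma: the fiber of the reduction map over `B` has cardinality
`2 ^ (B.U + 1)`. -/
theorem fiber_card {m : ℕ} (B : BTableau m) :
    Nat.card {T : BTableau (m + 1) // reduce T = B} = 2 ^ (B.U + 1) := by
  classical
  set S : Set ℕ := insert 0 ((fun i => i + 1) '' {i | i < m ∧ B.unres i}) with hS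
  have hsub : {i | i < m ∧ B.unres i} ⊆ Set.Iio m := fun i hi => hi.1
  have hfin0 : {i | i < m ∧ B.unres i}.Finite := (Set.finite_Iio m).subset hsub
  have hfin1 : ((fun i => i + 1) '' {i | i < m ∧ B.unres i}).Finite := hfin0.image _
  have hfinS : S.Finite := hfin1.insert 0
  -- the map from supported boolean vectors to the fiber
  have hg2' : ∀ (g : {g : ℕ → Bool // ∀ i, g i = true → i ∈ S}) (i : ℕ),
      g.1 (i + 1) = true → i < m ∧ B.unres i := by
    intro g i hgi
    have := g.2 (i + 1) hgi
    rw [hS, Set.mem_insert_iff] at this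
    rcases this with h0 | hmem
    · omega
    · obtain ⟨a, ha, hae⟩ := hmem
      simp only at hae
      have : a = i := by omega
      rw [← this]
      exact ha
  set ψ : {g : ℕ → Bool // ∀ i, g i = true → i ∈ S} →
      {T : BTableau (m + 1) // reduce T = B} := fun g =>
    if hg1 : ∃ i, g.1 i = true then
      ⟨extCol B g.1 hg1 (hg2' g), reduce_extCol B g.1 hg1 (hg2' g)⟩
    else ⟨extRow B, reduce_extRow B⟩ with hψ
  have hbij : Function.Bijective ψ := by
    constructor
    · intro g g' heq
      by_cases h1 : ∃ i, g.1 i = true <;> by_cases h2 : ∃ i, g'.1 i = true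
      · rw [hψ] at heq
        simp only [dif_pos h1, dif_pos h2, Subtype.mk.injEq] at heq
        apply Subtype.ext
        funext i
        have := congrArg (fun T => T.filling (i, 0)) heq
        simpa [extCol] using this
      · exfalso
        rw [hψ] at heq
        simp only [dif_pos h1, dif_neg h2, Subtype.mk.injEq] at heq
        have := congrArg BTableau.cols heq
        simp [extCol, extRow] at this
      · exfalso
        rw [hψ] at heq
        simp only [dif_neg h1, dif_pos h2, Subtype.mk.injEq] at heq
        have := congrArg BTableau.cols heq
        simp [extCol, extRow] at this
      · apply Subtype.ext
        funext i
        have e1 : g.1 i = false := by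
          cases hv : g.1 i with
          | false => rfl
          | true => exact absurd ⟨i, hv⟩ h1
        have e2 : g'.1 i = false := by
          cases hv : g'.1 i with
          | false => rfl
          | true => exact absurd ⟨i, hv⟩ h2
        rw [e1, e2]
    · rintro ⟨T, hT⟩
      rcases fiber_classify B T hT with hTe | ⟨g, hg1, hg2, hTe⟩
      · refine ⟨⟨fun _ => false, fun i h => by simp at h⟩, ?_⟩
        rw [hψ]
        have hne : ¬ ∃ i, (fun _ => false : ℕ → Bool) i = true := by simp
        simp only [dif_neg hne]
        exact Subtype.ext hTe.symm
      · have hsupp : ∀ i, g i = true → i ∈ S := by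
          intro i hgi
          match i with
          | 0 => exact Set.mem_insert 0 _
          | i + 1 =>
            rw [hS]
            right
            exact ⟨i, hg2 i hgi, rfl⟩
        refine ⟨⟨g, hsupp⟩, ?_⟩
        rw [hψ]
        simp only [dif_pos hg1]
        apply Subtype.ext
        exact (bt_ext rfl rfl rfl).trans hTe.symm
  rw [← Nat.card_eq_of_bijective ψ hbij]
  -- now count supported boolean vectors
  haveI : Finite ↥S := hfinS.to_subtype
  have e : {g : ℕ → Bool // ∀ i, g i = true → i ∈ S} ≃ (↥S → Bool) := by
    refine ⟨fun g s => g.1 s.1, fun h => ⟨fun i => if hi : i ∈ S then h ⟨i, hi⟩ else false,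
      ?_⟩, ?_, ?_⟩
    · intro i hgi
      by_cases hi : i ∈ S
      · exact hi
      · simp only [dif_neg hi] at hgi
        exact absurd hgi (by simp)
    · intro g
      apply Subtype.ext
      funext i
      by_cases hi : i ∈ S
      · exact dif_pos hi
      · simp only [dif_neg hi]
        cases hv : g.1 i with
        | false => rfl
        | true => exact absurd (g.2 i hv) hi
    · intro h
      funext s
      exact dif_pos s.2
  rw [Nat.card_congr e, Nat.card_fun]
  have hc2 : Nat.card Bool = 2 := by simp [Nat.card_eq_fintype_card]
  have hcS : Nat.card ↥S = B.U + 1 := by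
    rw [Nat.card_coe_set_eq, hS]
    rw [Set.ncard_insert_of_notMem (by simp) hfin1]
    rw [Set.ncard_image_of_injective _ (fun a b hab => by omega)]
    rfl
  rw [hc2, hcS]

end BAux
/-- For type-B permutation tableaux, the number of extensions of a tableau `B` of size
`n - 1` to a tableau of size `n` equals `2^{U_{n-1}(B) + 1}`; consequently
`|B_n| = Σ_{B ∈ B_{n-1}} 2^{U_{n-1}(B) + 1}`. -/
theorem extensions_BTableau (n : ℕ) (hn : 1 ≤ n) :
    ∃ red : BTableau n → BTableau (n - 1),
      (∀ B : BTableau (n - 1),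
        Nat.card {T : BTableau n // red T = B} = 2 ^ (B.U + 1)) ∧
      Nat.card (BTableau n) = ∑ᶠ B : BTableau (n - 1), 2 ^ (B.U + 1) := by
  classical
  obtain ⟨m, rfl⟩ : ∃ m, n = m + 1 := ⟨n - 1, by omega⟩

  show ∃ red : BTableau (m + 1) → BTableau m,
      (∀ B : BTableau m,
        Nat.card {T : BTableau (m + 1) // red T = B} = 2 ^ (B.U + 1)) ∧
      Nat.card (BTableau (m + 1)) = ∑ᶠ B : BTableau m, 2 ^ (B.U + 1)
  refine ⟨BAux.reduce, fun B => BAux.fiber_card B, ?_⟩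
  letI : Fintype (BTableau m) := Fintype.ofFinite _
  letI : ∀ B : BTableau m, Fintype {T : BTableau (m + 1) // BAux.reduce T = B} :=
    fun B => Fintype.ofFinite _
  rw [Nat.card_congr (Equiv.sigmaFiberEquiv (BAux.reduce (m := m))).symm]
  rw [Nat.card_eq_fintype_card, Fintype.card_sigma]
  rw [finsum_eq_sum_of_fintype]
  apply Finset.sum_congr rfl
  intro B _
  rw [← Nat.card_eq_fintype_card, BAux.fiber_card B]
end

section
/- The number of permutation tableaux of size n whose last border edge (the n-th step of the southeast border) is a south step equals (n−1)!. -/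
open scoped BigOperators
open Nat

section Aux
open scoped Classical

open Finset

lemma rowLen_unique {D : YoungDiagram} {i r : ℕ} (h : ∀ j, (i, j) ∈ D ↔ j < r) :
    D.rowLen i = r := by
  have h1 : D.rowLen i < r ↔ D.rowLen i < D.rowLen i :=
    (h _).symm.trans YoungDiagram.mem_iff_lt_rowLen
  have h2 : r < D.rowLen i ↔ r < r := YoungDiagram.mem_iff_lt_rowLen.symm.trans (h _)
  omega

lemma colLen_unique {D : YoungDiagram} {j r : ℕ} (h : ∀ i, (i, j) ∈ D ↔ i < r) :
    D.colLen j = r := by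
  have h1 : D.colLen j < r ↔ D.colLen j < D.colLen j :=
    (h _).symm.trans YoungDiagram.mem_iff_lt_colLen
  have h2 : r < D.colLen j ↔ r < r := YoungDiagram.mem_iff_lt_colLen.symm.trans (h _)
  omega

namespace PermTableau

variable {n : ℕ}

lemma pt_ext {T1 T2 : PermTableau n} (h1 : T1.shape = T2.shape)
    (h2 : T1.rows = T2.rows) (h3 : T1.filling = T2.filling) : T1 = T2 := by
  cases T1; cases T2
  dsimp at h1 h2 h3
  subst h1; subst h2; subst h3
  rfl

lemma rows_le (T : PermTableau n) : T.rows ≤ n := by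
  have := T.half; omega

lemma mem_lt (T : PermTableau n) {i j : ℕ} (h : (i, j) ∈ T.shape) :
    i < T.rows ∧ j < T.shape.rowLen 0 := by
  constructor
  · have h0 : (i, 0) ∈ T.shape := T.shape.up_left_mem le_rfl (Nat.zero_le _) h
    have := YoungDiagram.mem_iff_lt_colLen.mp h0
    exact lt_of_lt_of_le this T.rows_ge
  · have h0 : (0, j) ∈ T.shape := T.shape.up_left_mem (Nat.zero_le _) le_rfl h
    exact YoungDiagram.mem_iff_lt_rowLen.mp h0

lemma mem_lt_n (T : PermTableau n) {i j : ℕ} (h : (i, j) ∈ T.shape) : i < n ∧ j < n := by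
  have h1 := T.mem_lt h
  have h2 := T.half
  have h3 := T.rows_pos
  omega

instance : Finite (PermTableau n) := by
  have key : ∀ T : PermTableau n, T.rows < n + 1 := fun T => by have := T.rows_le; omega
  apply Finite.of_injective (f := fun T : PermTableau n =>
    ((fun p : Fin (n+1) × Fin (n+1) => decide ((p.1.1, p.2.1) ∈ T.shape)),
     (fun p : Fin (n+1) × Fin (n+1) => T.filling (p.1.1, p.2.1)),
     (⟨T.rows, key T⟩ : Fin (n+1))))
  intro T1 T2 h
  rw [Prod.ext_iff, Prod.ext_iff] at h
  obtain ⟨hs, hf, hr⟩ := h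
  have hb : ∀ {i j : ℕ}, ¬ (i ≤ n ∧ j ≤ n) → ((i, j) ∉ T1.shape ∧ (i, j) ∉ T2.shape) := by
    intro i j hij
    constructor <;> intro hm
    · exact hij ⟨le_of_lt (T1.mem_lt_n hm).1, le_of_lt (T1.mem_lt_n hm).2⟩
    · exact hij ⟨le_of_lt (T2.mem_lt_n hm).1, le_of_lt (T2.mem_lt_n hm).2⟩
  have hshape : T1.shape = T2.shape := by
    ext ⟨i, j⟩
    by_cases hij : i ≤ n ∧ j ≤ n
    · have := congrFun hs (⟨i, by omega⟩, ⟨j, by omega⟩)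
      simpa using this
    · simp only [YoungDiagram.mem_cells]
      exact iff_of_false (hb hij).1 (hb hij).2
  apply pt_ext hshape
  · simpa using congrArg Fin.val hr
  · funext ⟨i, j⟩
    by_cases hij : i ≤ n ∧ j ≤ n
    · exact congrFun hf (⟨i, by omega⟩, ⟨j, by omega⟩)
    · rw [T1.support _ (hb hij).1, T2.support _ (hb hij).2]

noncomputable instance : Fintype (PermTableau n) := Fintype.ofFinite _

/-- The finset of unrestricted rows. -/
noncomputable def URF (T : PermTableau n) : Finset ℕ :=
  (Finset.range T.rows).filter (fun i => T.unres i)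

lemma mem_URF {T : PermTableau n} {i : ℕ} : i ∈ T.URF ↔ i < T.rows ∧ T.unres i := by
  simp [URF]

lemma U_eq_card_URF (T : PermTableau n) : T.U = T.URF.card := by
  rw [PermTableau.U]
  have : {i | i < T.rows ∧ T.unres i} = ↑T.URF := by
    ext i; simp [mem_URF]
  rw [this, Set.ncard_coe_finset]

end PermTableau

end Aux
section Shapes
open Finset

/-- Remove column 0 from a Young diagram. -/
def stripCol (D : YoungDiagram) : YoungDiagram where
  cells := (D.cells.filter (fun c => 0 < c.2)).image (fun c => (c.1, c.2 - 1))
  isLowerSet := by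
    rintro ⟨i1, j1⟩ ⟨i2, j2⟩ ⟨hi, hj⟩ h
    simp only [Finset.coe_image, Finset.coe_filter, Set.mem_image, Set.mem_setOf_eq,
      YoungDiagram.mem_cells] at h ⊢
    obtain ⟨⟨a, b⟩, ⟨hab, hb⟩, heq⟩ := h
    simp only [Prod.mk.injEq] at heq
    refine ⟨(i2, j2 + 1), ⟨?_, by omega⟩, by simp⟩
    exact D.up_left_mem (by simpa [heq.1] using hi) (by omega) hab

lemma mem_stripCol {D : YoungDiagram} {i j : ℕ} : (i, j) ∈ stripCol D ↔ (i, j + 1) ∈ D := by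
  show (i, j) ∈ (stripCol D).cells ↔ _
  simp only [stripCol, Finset.mem_image, Finset.mem_filter, YoungDiagram.mem_cells]
  constructor
  · rintro ⟨⟨a, b⟩, ⟨hab, hb⟩, heq⟩
    simp only [Prod.mk.injEq] at heq
    obtain ⟨rfl, rfl⟩ : a = i ∧ b = j + 1 := by omega
    exact hab
  · intro h
    exact ⟨(i, j + 1), ⟨h, by omega⟩, by simp⟩

lemma rowLen_stripCol (D : YoungDiagram) (i : ℕ) : (stripCol D).rowLen i = D.rowLen i - 1 := by
  apply rowLen_unique
  intro j
  rw [mem_stripCol, YoungDiagram.mem_iff_lt_rowLen]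
  omega

/-- Add a new full-height column (of height `R`) on the left of a Young diagram. -/
def addCol (D : YoungDiagram) (R : ℕ) (hR : D.colLen 0 ≤ R) : YoungDiagram where
  cells := D.cells.image (fun c => (c.1, c.2 + 1)) ∪ (Finset.range R).image (fun i => (i, 0))
  isLowerSet := by
    rintro ⟨i1, j1⟩ ⟨i2, j2⟩ hle h
    rw [Prod.mk_le_mk] at hle
    obtain ⟨hi, hj⟩ := hle
    simp only [Finset.coe_union, Finset.coe_image, Finset.coe_range, Set.mem_union,
      Set.mem_image, Finset.mem_coe, YoungDiagram.mem_cells, Set.mem_Iio] at h ⊢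
    have hcell : ∀ {a b : ℕ}, (a, b) ∈ D → a < R := by
      intro a b hab
      have h0 : (a, 0) ∈ D := D.up_left_mem le_rfl (Nat.zero_le _) hab
      exact lt_of_lt_of_le (YoungDiagram.mem_iff_lt_colLen.mp h0) hR
    rcases h with ⟨⟨a, b⟩, hab, heq⟩ | ⟨a, ha, heq⟩
    · rw [Prod.mk.injEq] at heq
      obtain ⟨ha2, hb2⟩ := heq
      rcases Nat.eq_zero_or_pos j2 with hj2 | hj2
      · refine Or.inr ⟨i2, by have := hcell hab; simp at ha2 ⊢; omega, ?_⟩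
        rw [Prod.mk.injEq]; omega
      · refine Or.inl ⟨(i2, j2 - 1), D.up_left_mem (by simp at ha2; omega) (by simp at hb2; omega) hab, ?_⟩
        rw [Prod.mk.injEq]; omega
    · rw [Prod.mk.injEq] at heq
      obtain ⟨ha2, hb2⟩ := heq
      refine Or.inr ⟨i2, by omega, ?_⟩
      rw [Prod.mk.injEq]; omega

lemma mem_addCol {D : YoungDiagram} {R : ℕ} {hR : D.colLen 0 ≤ R} {i j : ℕ} :
    (i, j) ∈ addCol D R hR ↔ (j = 0 ∧ i < R) ∨ (0 < j ∧ (i, j - 1) ∈ D) := by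
  show (i, j) ∈ (addCol D R hR).cells ↔ _
  simp only [addCol, Finset.mem_union, Finset.mem_image, Finset.mem_range,
    YoungDiagram.mem_cells]
  constructor
  · rintro (⟨⟨a, b⟩, hab, heq⟩ | ⟨a, ha, heq⟩)
    · simp only [Prod.mk.injEq] at heq
      obtain ⟨rfl, rfl⟩ : a = i ∧ b = j - 1 := by omega
      have : 0 < j := by omega
      exact Or.inr ⟨this, hab⟩
    · simp only [Prod.mk.injEq] at heq
      obtain ⟨rfl, rfl⟩ := heq.symm
      exact Or.inl ⟨rfl, by omega⟩
  · rintro (⟨rfl, hiR⟩ | ⟨hj, hmem⟩)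
    · exact Or.inr ⟨i, hiR, rfl⟩
    · exact Or.inl ⟨(i, j - 1), hmem, by simp; omega⟩

lemma rowLen_addCol {D : YoungDiagram} {R : ℕ} (hR : D.colLen 0 ≤ R) (i : ℕ) :
    (addCol D R hR).rowLen i = if i < R then D.rowLen i + 1 else 0 := by
  apply rowLen_unique
  intro j
  rw [mem_addCol]
  by_cases hi : i < R <;> simp [hi] <;>
    [skip; skip] <;> try omega
  · rw [YoungDiagram.mem_iff_lt_rowLen]
    constructor
    · rintro (rfl | ⟨hj, hlt⟩) <;> omega
    · intro hj
      rcases Nat.eq_zero_or_pos j with rfl | hpos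
      · exact Or.inl rfl
      · exact Or.inr ⟨hpos, by omega⟩
  · intro hj hmem
    have hc : (i, 0) ∈ D := D.up_left_mem le_rfl (Nat.zero_le _) hmem
    have := YoungDiagram.mem_iff_lt_colLen.mp hc
    omega

lemma colLen_addCol {D : YoungDiagram} {R : ℕ} (hR : D.colLen 0 ≤ R) :
    (addCol D R hR).colLen 0 = R := by
  apply colLen_unique
  intro i
  rw [mem_addCol]
  simp

lemma stripCol_addCol {D : YoungDiagram} {R : ℕ} (hR : D.colLen 0 ≤ R) :
    stripCol (addCol D R hR) = D := by
  ext ⟨i, j⟩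
  simp only [YoungDiagram.mem_cells]
  rw [mem_stripCol, mem_addCol]
  simp

lemma addCol_stripCol {D : YoungDiagram} {R : ℕ} (hR : (stripCol D).colLen 0 ≤ R)
    (h : D.colLen 0 = R) : addCol (stripCol D) R hR = D := by
  ext ⟨i, j⟩
  simp only [YoungDiagram.mem_cells]
  rw [mem_addCol]
  rcases Nat.eq_zero_or_pos j with rfl | hj
  · rw [show ((i, 0) ∈ D ↔ i < D.colLen 0) from YoungDiagram.mem_iff_lt_colLen]
    simp [h]
  · rw [mem_stripCol]
    have : j - 1 + 1 = j := by omega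
    rw [this]
    constructor
    · rintro (⟨h0, _⟩ | ⟨_, hm⟩)
      · omega
      · exact hm
    · intro hm; exact Or.inr ⟨hj, hm⟩

lemma colLen_stripCol_le (D : YoungDiagram) : (stripCol D).colLen 0 ≤ D.colLen 0 := by
  by_contra hlt
  push_neg at hlt
  have : (D.colLen 0, 0) ∈ stripCol D := YoungDiagram.mem_iff_lt_colLen.mpr hlt
  rw [mem_stripCol] at this
  have : (D.colLen 0, 0) ∈ D := D.up_left_mem le_rfl (Nat.zero_le _) this
  have := YoungDiagram.mem_iff_lt_colLen.mp this
  omega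

end Shapes
section SouthExt
open Finset

lemma rowLen_eq_zero_iff {D : YoungDiagram} {i : ℕ} : D.rowLen i = 0 ↔ D.colLen 0 ≤ i := by
  constructor
  · intro h
    by_contra h'
    push_neg at h'
    have := YoungDiagram.mem_iff_lt_rowLen.mp (YoungDiagram.mem_iff_lt_colLen.mpr h')
    omega
  · intro h
    by_contra h'
    have h0 : (i, 0) ∈ D := YoungDiagram.mem_iff_lt_rowLen.mpr (by omega)
    have := YoungDiagram.mem_iff_lt_colLen.mp h0
    omega

namespace PermTableau

variable {m : ℕ}

lemma south_iff_colLen_lt_rows {n : ℕ} (T : PermTableau n) :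
    T.south n ↔ T.shape.colLen 0 < T.rows := by
  have hhalf := T.half
  have hge := T.rows_ge
  have hpos := T.rows_pos
  constructor
  · rintro ⟨i, hi⟩
    rcases Nat.eq_zero_or_pos (T.shape.rowLen i) with h0 | h0
    · rw [h0] at hi
      have hcol : T.shape.colLen 0 ≤ i := rowLen_eq_zero_iff.mp h0
      omega
    · have hmem : (i, 0) ∈ T.shape := YoungDiagram.mem_iff_lt_rowLen.mpr h0
      have hic : i < T.shape.colLen 0 := YoungDiagram.mem_iff_lt_colLen.mp hmem
      have hle : T.shape.rowLen i ≤ T.shape.rowLen 0 := T.shape.rowLen_anti 0 i (Nat.zero_le _)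
      omega
  · intro h
    refine ⟨T.rows - 1, ?_⟩
    have h0 : T.shape.rowLen (T.rows - 1) = 0 := rowLen_eq_zero_iff.mpr (by omega)
    rw [h0]
    omega

/-- Add an empty row at the bottom of a permutation tableau. -/
def southExt (T : PermTableau m) : PermTableau (m + 1) where
  shape := T.shape
  rows := T.rows + 1
  rows_pos := by omega
  rows_ge := le_trans T.rows_ge (Nat.le_succ _)
  half := by have := T.half; omega
  filling := T.filling
  support := T.support
  col_one := T.col_one
  avoid := T.avoid

lemma unres_southExt (T : PermTableau m) (i : ℕ) : (southExt T).unres i ↔ T.unres i :=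
  Iff.rfl

lemma unres_of_rows_le (T : PermTableau m) {i : ℕ} (h : T.shape.colLen 0 ≤ i) : T.unres i := by
  intro j hj
  have : i < T.shape.colLen 0 :=
    YoungDiagram.mem_iff_lt_colLen.mp (T.shape.up_left_mem le_rfl (Nat.zero_le _) hj)
  omega

lemma URF_southExt (T : PermTableau m) : (southExt T).URF = insert T.rows T.URF := by
  have hu : T.unres T.rows := T.unres_of_rows_le (le_trans T.rows_ge le_rfl)
  ext i
  rw [mem_URF, Finset.mem_insert, mem_URF]
  show i < T.rows + 1 ∧ T.unres i ↔ _
  constructor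
  · rintro ⟨hi, hun⟩
    rcases Nat.lt_succ_iff_lt_or_eq.mp hi with h | rfl
    · exact Or.inr ⟨h, hun⟩
    · exact Or.inl rfl
  · rintro (rfl | ⟨hi, hun⟩)
    · exact ⟨by omega, hu⟩
    · exact ⟨by omega, hun⟩

lemma U_southExt (T : PermTableau m) : (southExt T).U = T.U + 1 := by
  rw [U_eq_card_URF, U_eq_card_URF, URF_southExt,
    Finset.card_insert_of_notMem (fun h => by have := (mem_URF.mp h).1; omega)]

/-- Remove the empty bottom row of a permutation tableau whose last step is south. -/
def shrink (hm : 1 ≤ m) (T : PermTableau (m + 1)) (h : T.shape.colLen 0 < T.rows) :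
    PermTableau m where
  shape := T.shape
  rows := T.rows - 1
  rows_pos := by
    rcases Nat.eq_zero_or_pos (T.shape.colLen 0) with h0 | h0
    · have : T.shape.rowLen 0 = 0 := by
        have := rowLen_eq_zero_iff (D := T.shape) (i := 0)
        omega
      have := T.half
      omega
    · omega
  rows_ge := by omega
  half := by have := T.half; have := T.rows_pos; omega
  filling := T.filling
  support := T.support
  col_one := T.col_one
  avoid := T.avoid

/-- Tableaux of size `m+1` with last step south are in bijection with tableaux of size `m`. -/
noncomputable def southEquiv (hm : 1 ≤ m) :
    {T : PermTableau (m + 1) // T.shape.colLen 0 < T.rows} ≃ PermTableau m where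
  toFun T := shrink hm T.1 T.2
  invFun T := ⟨southExt T, lt_of_le_of_lt T.rows_ge (by simp [southExt])⟩
  left_inv T := by
    apply Subtype.ext
    refine pt_ext rfl ?_ rfl
    have := T.1.rows_pos
    show T.1.rows - 1 + 1 = T.1.rows
    omega
  right_inv T := by
    refine pt_ext rfl ?_ rfl
    show T.rows + 1 - 1 = T.rows
    omega

lemma U_shrink (hm : 1 ≤ m) (T : PermTableau (m + 1)) (h : T.shape.colLen 0 < T.rows) :
    T.U = (shrink hm T h).U + 1 := by
  have : T = southExt (shrink hm T h) := by
    refine pt_ext rfl ?_ rfl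
    show T.rows = T.rows - 1 + 1
    have := T.rows_pos
    omega
  conv_lhs => rw [this]
  exact U_southExt _

end PermTableau
end SouthExt
section WestExt
open Finset

namespace PermTableau

variable {m : ℕ}

/-- Admissible new-column data: a nonempty set of unrestricted rows. -/
def goodSet (T : PermTableau m) (S : Finset ℕ) : Prop := S.Nonempty ∧ S ⊆ T.URF

lemma goodSet.lt_rows {T : PermTableau m} {S : Finset ℕ} (hS : T.goodSet S) {i : ℕ}
    (hi : i ∈ S) : i < T.rows := (mem_URF.mp (hS.2 hi)).1

lemma goodSet.unres {T : PermTableau m} {S : Finset ℕ} (hS : T.goodSet S) {i : ℕ}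
    (hi : i ∈ S) : T.unres i := (mem_URF.mp (hS.2 hi)).2

/-- Add a new full-height column on the left of a permutation tableau, putting `1`s
exactly in the rows of `S`. -/
def westExt (T : PermTableau m) (S : Finset ℕ) (hS : T.goodSet S) : PermTableau (m + 1) where
  shape := addCol T.shape T.rows T.rows_ge
  rows := T.rows
  rows_pos := T.rows_pos
  rows_ge := le_of_eq (colLen_addCol T.rows_ge)
  half := by
    rw [rowLen_addCol T.rows_ge 0, if_pos T.rows_pos]
    have := T.half; omega
  filling := fun c => if c.2 = 0 then decide (c.1 ∈ S) else T.filling (c.1, c.2 - 1)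
  support := by
    rintro ⟨i, j⟩ hij
    rw [mem_addCol] at hij
    push_neg at hij
    rcases Nat.eq_zero_or_pos j with rfl | hj
    · have hge := hij.1 rfl
      have : i ∉ S := fun hi => by have := hS.lt_rows hi; omega
      simp [this]
    · have : (i, j - 1) ∉ T.shape := hij.2 hj
      simp only [show j ≠ 0 by omega, if_neg]
      exact T.support _ this
  col_one := by
    intro j hj
    rw [rowLen_addCol T.rows_ge 0, if_pos T.rows_pos] at hj
    rcases Nat.eq_zero_or_pos j with rfl | hjpos
    · obtain ⟨i, hi⟩ := hS.1
      exact ⟨i, by simp [hi]⟩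
    · obtain ⟨i, hi⟩ := T.col_one (j - 1) (by omega)
      refine ⟨i, ?_⟩
      simp only [show j ≠ 0 by omega, if_neg]
      exact hi
  avoid := by
    intro i j hmem hf hex j' hj'
    rcases Nat.eq_zero_or_pos j with rfl | hjpos
    · omega
    · obtain ⟨k, rfl⟩ : ∃ k, j = k + 1 := ⟨j - 1, by omega⟩
      rw [mem_addCol] at hmem
      have hmem' : (i, k) ∈ T.shape := by
        rcases hmem with ⟨h0, _⟩ | ⟨_, h⟩
        · omega
        · simpa using h
      change T.filling (i, k) = false at hf
      obtain ⟨i', hi', hf'⟩ := hex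
      change T.filling (i', k) = true at hf'
      rcases Nat.eq_zero_or_pos j' with rfl | hj'pos
      · show decide (i ∈ S) = false
        simp only [decide_eq_false_iff_not]
        intro hiS
        have := hS.unres hiS k hmem' hf i' hi'
        rw [this] at hf'
        exact Bool.false_ne_true hf'
      · obtain ⟨l, rfl⟩ : ∃ l, j' = l + 1 := ⟨j' - 1, by omega⟩
        show T.filling (i, l) = false
        exact T.avoid i k hmem' hf ⟨i', hi', hf'⟩ l (by omega)

lemma shape_westExt {T : PermTableau m} {S : Finset ℕ} (hS : T.goodSet S) :
    (westExt T S hS).shape = addCol T.shape T.rows T.rows_ge := rfl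

lemma filling_westExt_zero {T : PermTableau m} {S : Finset ℕ} (hS : T.goodSet S) (i : ℕ) :
    (westExt T S hS).filling (i, 0) = decide (i ∈ S) := rfl

lemma filling_westExt_succ {T : PermTableau m} {S : Finset ℕ} (hS : T.goodSet S) (i j : ℕ) :
    (westExt T S hS).filling (i, j + 1) = T.filling (i, j) := rfl

lemma unres_westExt {T : PermTableau m} {S : Finset ℕ} (hS : T.goodSet S) {i : ℕ}
    (hi : i < T.rows) :
    (westExt T S hS).unres i ↔ i ∈ S ∨ (T.unres i ∧ ∀ i' ∈ S, ¬ i' < i) := by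
  constructor
  · intro hu
    by_cases hiS : i ∈ S
    · exact Or.inl hiS
    · refine Or.inr ⟨?_, ?_⟩
      · intro j hj hf i' hi'
        have hmem : (i, j + 1) ∈ (westExt T S hS).shape := by
          rw [shape_westExt, mem_addCol]
          exact Or.inr ⟨by omega, by simpa using hj⟩
        have hf2 : (westExt T S hS).filling (i, j + 1) = false := by
          rw [filling_westExt_succ]; exact hf
        have := hu (j + 1) hmem hf2 i' hi'
        rw [filling_westExt_succ] at this
        exact this
      · intro i' hi'S hi'lt
        have hmem : (i, 0) ∈ (westExt T S hS).shape := by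
          rw [shape_westExt, mem_addCol]
          exact Or.inl ⟨rfl, hi⟩
        have hf0 : (westExt T S hS).filling (i, 0) = false := by
          rw [filling_westExt_zero]; simp [hiS]
        have := hu 0 hmem hf0 i' hi'lt
        rw [filling_westExt_zero] at this
        simp only [decide_eq_false_iff_not] at this
        exact this hi'S
  · intro h j hj hf i' hi'
    rcases Nat.eq_zero_or_pos j with rfl | hjpos
    · rw [filling_westExt_zero] at hf
      simp only [decide_eq_false_iff_not] at hf
      rcases h with hiS | ⟨_, hall⟩
      · exact absurd hiS hf
      · rw [filling_westExt_zero]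
        simp only [decide_eq_false_iff_not]
        intro hi'S
        exact hall i' hi'S hi'
    · obtain ⟨k, rfl⟩ : ∃ k, j = k + 1 := ⟨j - 1, by omega⟩
      rw [shape_westExt, mem_addCol] at hj
      have hmem : (i, k) ∈ T.shape := by
        rcases hj with ⟨h0, _⟩ | ⟨_, hmm⟩
        · omega
        · simpa using hmm
      rw [filling_westExt_succ] at hf
      have hun : T.unres i := by
        rcases h with hiS | ⟨hu, _⟩
        · exact hS.unres hiS
        · exact hu
      rw [filling_westExt_succ]
      exact hun k hmem hf i' hi'

lemma URF_westExt {T : PermTableau m} {S : Finset ℕ} (hS : T.goodSet S) :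
    (westExt T S hS).URF =
      S ∪ (T.URF.filter (fun i => ∀ j ∈ S, i < j)) := by
  classical
  ext i
  rw [mem_URF, Finset.mem_union, Finset.mem_filter]
  show i < T.rows ∧ (westExt T S hS).unres i ↔ _
  constructor
  · rintro ⟨hi, hu⟩
    rw [unres_westExt hS hi] at hu
    rcases hu with hiS | ⟨hun, hall⟩
    · exact Or.inl hiS
    · by_cases hiS : i ∈ S
      · exact Or.inl hiS
      · refine Or.inr ⟨mem_URF.mpr ⟨hi, hun⟩, ?_⟩
        intro j hj
        have h1 := hall j hj
        have : i ≠ j := fun h => hiS (h ▸ hj)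
        omega
  · rintro (hiS | ⟨hiU, hall⟩)
    · exact ⟨hS.lt_rows hiS, (unres_westExt hS (hS.lt_rows hiS)).mpr (Or.inl hiS)⟩
    · obtain ⟨hi, hun⟩ := mem_URF.mp hiU
      refine ⟨hi, (unres_westExt hS hi).mpr (Or.inr ⟨hun, ?_⟩)⟩
      intro i' hi'S
      have := hall i' hi'S
      omega

lemma U_westExt {T : PermTableau m} {S : Finset ℕ} (hS : T.goodSet S) :
    (westExt T S hS).U = S.card + (T.URF.filter (fun i => ∀ j ∈ S, i < j)).card := by
  classical
  rw [U_eq_card_URF, URF_westExt hS, Finset.card_union_of_disjoint]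
  rw [Finset.disjoint_left]
  intro i hiS hi
  have := (Finset.mem_filter.mp hi).2 i hiS
  omega

end PermTableau
end WestExt
section Classify
open Finset

namespace PermTableau

variable {m : ℕ}

/-- Remove column 0 of a permutation tableau whose last step is west. -/
def westShrink (T : PermTableau (m + 1)) (h : T.shape.colLen 0 = T.rows) : PermTableau m where
  shape := stripCol T.shape
  rows := T.rows
  rows_pos := T.rows_pos
  rows_ge := le_trans (colLen_stripCol_le _) (le_of_eq h)
  half := by
    rw [rowLen_stripCol]
    have h1 : (0, 0) ∈ T.shape := by
      rw [YoungDiagram.mem_iff_lt_colLen, h]; exact T.rows_pos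
    have h2 : 0 < T.shape.rowLen 0 := YoungDiagram.mem_iff_lt_rowLen.mp h1
    have := T.half
    omega
  filling := fun c => T.filling (c.1, c.2 + 1)
  support := by
    rintro ⟨i, j⟩ hij
    rw [mem_stripCol] at hij
    exact T.support _ hij
  col_one := by
    intro j hj
    rw [rowLen_stripCol] at hj
    exact T.col_one (j + 1) (by omega)
  avoid := by
    intro i j hmem hf hex j' hj'
    rw [mem_stripCol] at hmem
    obtain ⟨i', hi', hf'⟩ := hex
    exact T.avoid i (j + 1) hmem hf ⟨i', hi', hf'⟩ (j' + 1) (by omega)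

/-- The set of rows with a `1` in column 0. -/
def colSet (T : PermTableau (m + 1)) : Finset ℕ :=
  (Finset.range T.rows).filter (fun i => T.filling (i, 0) = true)

lemma mem_colSet {T : PermTableau (m + 1)} {i : ℕ} :
    i ∈ colSet T ↔ i < T.rows ∧ T.filling (i, 0) = true := by
  simp [colSet]

lemma colSet_good (T : PermTableau (m + 1)) (h : T.shape.colLen 0 = T.rows) :
    (westShrink T h).goodSet (colSet T) := by
  have hbound : ∀ {i : ℕ}, T.filling (i, 0) = true → i < T.rows := by
    intro i hf
    by_contra hge
    have : (i, 0) ∉ T.shape := by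
      rw [YoungDiagram.mem_iff_lt_colLen, h]
      omega
    rw [T.support _ this] at hf
    exact Bool.false_ne_true hf
  constructor
  · have h1 : (0, 0) ∈ T.shape := by
      rw [YoungDiagram.mem_iff_lt_colLen, h]; exact T.rows_pos
    have h2 : 0 < T.shape.rowLen 0 := YoungDiagram.mem_iff_lt_rowLen.mp h1
    obtain ⟨i, hi⟩ := T.col_one 0 h2
    exact ⟨i, mem_colSet.mpr ⟨hbound hi, hi⟩⟩
  · intro i hi
    obtain ⟨hilt, hif⟩ := mem_colSet.mp hi
    rw [mem_URF]
    refine ⟨hilt, ?_⟩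
    intro j hj hf i' hi'
    show T.filling (i', j + 1) = false
    by_contra hne
    have hf' : T.filling (i', j + 1) = true := by
      cases hx : T.filling (i', j + 1)
      · exact absurd hx hne
      · rfl
    have hj2 : (i, j + 1) ∈ T.shape := mem_stripCol.mp hj
    have := T.avoid i (j + 1) hj2 hf ⟨i', hi', hf'⟩ 0 (by omega)
    rw [this] at hif
    exact Bool.false_ne_true hif

lemma sigma_mk_eq {T T' : PermTableau m} {S S' : Finset ℕ} {h : T.goodSet S}
    {h' : T'.goodSet S'} (h1 : T = T') (h2 : S = S') :
    (⟨T, ⟨S, h⟩⟩ : Σ T : PermTableau m, {S : Finset ℕ // T.goodSet S}) = ⟨T', ⟨S', h'⟩⟩ := by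
  subst h1; subst h2; rfl

/-- The classification of permutation tableaux of size `m+1` by last border step. -/
noncomputable def classify (hm : 1 ≤ m) :
    PermTableau (m + 1) ≃
      (PermTableau m) ⊕ (Σ T : PermTableau m, {S : Finset ℕ // T.goodSet S}) where
  toFun T :=
    if h : T.shape.colLen 0 < T.rows then Sum.inl (shrink hm T h)
    else
      Sum.inr ⟨westShrink T (le_antisymm T.rows_ge (not_lt.mp h)),
        ⟨colSet T, colSet_good T _⟩⟩
  invFun z :=
    match z with
    | Sum.inl T => southExt T
    | Sum.inr ⟨T, ⟨S, hS⟩⟩ => westExt T S hS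
  left_inv T := by
    dsimp only
    split_ifs with h
    · show southExt (shrink hm T h) = T
      refine pt_ext rfl ?_ rfl
      show T.rows - 1 + 1 = T.rows
      have := T.rows_pos
      omega
    · have hcl : T.shape.colLen 0 = T.rows := le_antisymm T.rows_ge (not_lt.mp h)
      show westExt (westShrink T hcl) (colSet T) (colSet_good T hcl) = T
      refine pt_ext ?_ rfl ?_
      · exact addCol_stripCol (T.westShrink hcl).rows_ge hcl
      · funext ⟨i, j⟩
        rcases Nat.eq_zero_or_pos j with rfl | hj
        · rw [filling_westExt_zero]
          rcases hx : T.filling (i, 0) with _ | _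
          · have : i ∉ colSet T := fun hc => by
              rw [(mem_colSet.mp hc).2] at hx
              exact Bool.noConfusion hx
            simp [this]
          · have hib : i < T.rows := by
              by_contra hge
              have hnm : (i, 0) ∉ T.shape := by
                rw [YoungDiagram.mem_iff_lt_colLen, hcl]; omega
              rw [T.support _ hnm] at hx
              exact Bool.false_ne_true hx
            have : i ∈ colSet T := mem_colSet.mpr ⟨hib, hx⟩
            simp [this]
        · obtain ⟨k, rfl⟩ : ∃ k, j = k + 1 := ⟨j - 1, by omega⟩
          rw [filling_westExt_succ]
          rfl
  right_inv z := by
    match z with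
    | Sum.inl T =>
      have hlt : (southExt T).shape.colLen 0 < (southExt T).rows :=
        lt_of_le_of_lt T.rows_ge (Nat.lt_succ_self _)
      dsimp only
      rw [dif_pos hlt]
      have : shrink hm (southExt T) hlt = T := by
        refine pt_ext rfl ?_ rfl
        show T.rows + 1 - 1 = T.rows
        omega
      rw [this]
    | Sum.inr ⟨T, ⟨S, hS⟩⟩ =>
      have hcl : (westExt T S hS).shape.colLen 0 = (westExt T S hS).rows := by
        rw [shape_westExt, colLen_addCol]; rfl
      have hnlt : ¬ (westExt T S hS).shape.colLen 0 < (westExt T S hS).rows := by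
        rw [hcl]
        exact lt_irrefl _
      dsimp only
      rw [dif_neg hnlt]
      congr 1
      apply sigma_mk_eq
      · refine pt_ext ?_ rfl ?_
        · show stripCol (addCol T.shape T.rows T.rows_ge) = T.shape
          exact stripCol_addCol _
        · funext ⟨i, j⟩
          show (westExt T S hS).filling (i, j + 1) = T.filling (i, j)
          rw [filling_westExt_succ]
      · ext i
        rw [mem_colSet]
        show (i < T.rows ∧ (westExt T S hS).filling (i, 0) = true) ↔ i ∈ S
        rw [filling_westExt_zero]
        simp only [decide_eq_true_eq]
        exact ⟨fun h => h.2, fun h => ⟨hS.lt_rows h, h⟩⟩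

end PermTableau
end Classify
section Sums
open Finset

lemma sum_pow_card (x : ℕ) (F : Finset ℕ) :
    ∑ S ∈ F.powerset, x ^ S.card = (x + 1) ^ F.card := by
  induction F using Finset.induction_on with
  | empty => simp
  | insert a F ha ih =>
    rw [Finset.sum_powerset_insert ha]
    have h2 : ∑ t ∈ F.powerset, x ^ (insert a t).card = (∑ t ∈ F.powerset, x ^ t.card) * x := by
      rw [Finset.sum_mul]
      refine Finset.sum_congr rfl fun t ht => ?_
      rw [Finset.card_insert_of_notMem (fun hat => ha (Finset.mem_powerset.mp ht hat)),
        pow_succ]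
    rw [h2, ih, Finset.card_insert_of_notMem ha, pow_succ]
    ring

lemma key_sum (x : ℕ) (F : Finset ℕ) :
    (∑ S ∈ F.powerset.filter (fun S => S.Nonempty),
        x ^ (S.card + (F.filter (fun i => ∀ j ∈ S, i < j)).card)) + x ^ (F.card + 1)
      = x * (x + 1) ^ F.card := by
  induction F using Finset.induction_on_min with
  | empty => simp
  | insert a F hmin ih =>
    have ha : a ∉ F := fun h => lt_irrefl a (hmin a h)
    rw [Finset.sum_filter, Finset.sum_powerset_insert ha]
    have hterm1 : ∀ t ∈ F.powerset,
        (if t.Nonempty then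
          x ^ (t.card + ((insert a F).filter (fun i => ∀ j ∈ t, i < j)).card) else 0)
        = x * (if t.Nonempty then
            x ^ (t.card + (F.filter (fun i => ∀ j ∈ t, i < j)).card) else 0) := by
      intro t ht
      by_cases hne : t.Nonempty
      · rw [if_pos hne, if_pos hne]
        have hfil : (insert a F).filter (fun i => ∀ j ∈ t, i < j)
            = insert a (F.filter (fun i => ∀ j ∈ t, i < j)) := by
          rw [Finset.filter_insert, if_pos]
          intro j hj
          exact hmin j (Finset.mem_powerset.mp ht hj)
        rw [hfil, Finset.card_insert_of_notMem (fun hmem => ha (Finset.mem_filter.mp hmem).1)]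
        rw [show t.card + ((F.filter (fun i => ∀ j ∈ t, i < j)).card + 1)
            = (t.card + (F.filter (fun i => ∀ j ∈ t, i < j)).card) + 1 from by omega,
          pow_succ]
        ring
      · rw [if_neg hne, if_neg hne, mul_zero]
    have hterm2 : ∀ t ∈ F.powerset,
        (if (insert a t).Nonempty then
          x ^ ((insert a t).card + ((insert a F).filter (fun i => ∀ j ∈ insert a t, i < j)).card)
          else 0)
        = x ^ (t.card + 1) := by
      intro t ht
      rw [if_pos (Finset.insert_nonempty _ _)]
      have hat : a ∉ t := fun h => ha (Finset.mem_powerset.mp ht h)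
      have hfil : (insert a F).filter (fun i => ∀ j ∈ insert a t, i < j) = ∅ := by
        rw [Finset.filter_eq_empty_iff]
        intro i hi
        rw [Finset.mem_insert] at hi
        intro hall
        have := hall a (Finset.mem_insert_self a t)
        rcases hi with rfl | hi
        · exact lt_irrefl _ this
        · exact lt_asymm this (hmin i hi)
      rw [hfil, Finset.card_insert_of_notMem hat]
      simp
    rw [Finset.sum_congr rfl hterm1, Finset.sum_congr rfl hterm2, ← Finset.mul_sum,
      ← Finset.sum_filter]
    have hpc : ∑ t ∈ F.powerset, x ^ (t.card + 1) = x * (x + 1) ^ F.card := by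
      rw [← sum_pow_card x F, Finset.mul_sum]
      refine Finset.sum_congr rfl fun t _ => ?_
      rw [pow_succ]
      ring
    rw [hpc, Finset.card_insert_of_notMem ha]
    have goal2 : x * ((∑ S ∈ F.powerset.filter (fun S => S.Nonempty),
        x ^ (S.card + (F.filter (fun i => ∀ j ∈ S, i < j)).card)) + x ^ (F.card + 1))
        = x * (x * (x + 1) ^ F.card) := by rw [ih]
    rw [mul_add] at goal2
    calc x * (∑ S ∈ F.powerset.filter (fun S => S.Nonempty),
            x ^ (S.card + (F.filter (fun i => ∀ j ∈ S, i < j)).card))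
          + x * (x + 1) ^ F.card + x ^ (F.card + 1 + 1)
        = (x * (∑ S ∈ F.powerset.filter (fun S => S.Nonempty),
            x ^ (S.card + (F.filter (fun i => ∀ j ∈ S, i < j)).card))
          + x * x ^ (F.card + 1)) + x * (x + 1) ^ F.card := by ring
      _ = x * (x * (x + 1) ^ F.card) + x * (x + 1) ^ F.card := by rw [goal2]
      _ = x * (x + 1) ^ (F.card + 1) := by ring

end Sums
section Count
open Finset

namespace PermTableau

variable {m : ℕ}

instance finiteGoodSet (T : PermTableau m) : Finite {S : Finset ℕ // T.goodSet S} :=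
  Finite.of_injective
    (fun S => (⟨S.1, Finset.mem_powerset.mpr S.2.2⟩ : {A : Finset ℕ // A ∈ T.URF.powerset}))
    (fun a b h => Subtype.ext (by simpa using congrArg Subtype.val h))

noncomputable instance fintypeGoodSet (T : PermTableau m) :
    Fintype {S : Finset ℕ // T.goodSet S} :=
  Fintype.ofFinite _

lemma sum_goodSet (T : PermTableau m) (x : ℕ) :
    (∑ S : {S : Finset ℕ // T.goodSet S}, x ^ (westExt T S.1 S.2).U) + x ^ (T.U + 1)
      = x * (x + 1) ^ T.U := by
  classical
  have h1 : ∀ S : {S : Finset ℕ // T.goodSet S},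
      x ^ (westExt T S.1 S.2).U
        = x ^ (S.1.card + (T.URF.filter (fun i => ∀ j ∈ S.1, i < j)).card) :=
    fun S => by rw [U_westExt]
  rw [Finset.sum_congr rfl (fun S _ => h1 S)]
  have h2 := Finset.sum_subtype (p := fun S : Finset ℕ => T.goodSet S)
    (F := fintypeGoodSet T)
    (T.URF.powerset.filter (fun S => S.Nonempty))
    (fun S => by
      rw [Finset.mem_filter, Finset.mem_powerset]
      exact ⟨fun h => ⟨h.2, h.1⟩, fun h => ⟨h.2, h.1⟩⟩)
    (fun S => x ^ (S.card + (T.URF.filter (fun i => ∀ j ∈ S, i < j)).card))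
  rw [← h2, U_eq_card_URF]
  exact key_sum x T.URF

lemma classify_symm_inl (hm : 1 ≤ m) (T : PermTableau m) :
    (classify hm).symm (Sum.inl T) = southExt T := rfl

lemma classify_symm_inr (hm : 1 ≤ m) (T : PermTableau m) (S : {S : Finset ℕ // T.goodSet S}) :
    (classify hm).symm (Sum.inr ⟨T, S⟩) = westExt T S.1 S.2 := rfl

lemma sum_step (hm : 1 ≤ m) (x : ℕ) :
    ∑ T' : PermTableau (m + 1), x ^ T'.U = x * ∑ T : PermTableau m, (x + 1) ^ T.U := by
  classical
  rw [← Equiv.sum_comp (classify hm).symm (fun T' : PermTableau (m + 1) => x ^ T'.U)]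
  rw [Fintype.sum_sum_type]
  have hinl : ∀ T : PermTableau m,
      x ^ ((classify hm).symm (Sum.inl T)).U = x ^ (T.U + 1) := by
    intro T
    rw [classify_symm_inl, U_southExt]
  have hinr : ∑ p : Σ T : PermTableau m, {S : Finset ℕ // T.goodSet S},
      x ^ ((classify hm).symm (Sum.inr p)).U
      = ∑ T : PermTableau m, ∑ S : {S : Finset ℕ // T.goodSet S},
          x ^ (westExt T S.1 S.2).U := by
    rw [← Finset.univ_sigma_univ, Finset.sum_sigma]
    rfl
  rw [Finset.sum_congr rfl (fun T _ => hinl T), hinr, ← Finset.sum_add_distrib]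
  rw [Finset.mul_sum]
  refine Finset.sum_congr rfl fun T _ => ?_
  rw [add_comm, sum_goodSet]

noncomputable instance uniquePT1 : Unique (PermTableau 1) where
  default :=
    { shape := ⊥
      rows := 1
      rows_pos := Nat.one_pos
      rows_ge := by
        have : (⊥ : YoungDiagram).colLen 0 = 0 :=
          colLen_unique (fun i => by simp [YoungDiagram.notMem_bot])
        omega
      half := by
        have : (⊥ : YoungDiagram).rowLen 0 = 0 :=
          rowLen_unique (fun j => by simp [YoungDiagram.notMem_bot])
        omega
      filling := fun _ => false
      support := fun _ _ => rfl
      col_one := by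
        intro j hj
        have : (⊥ : YoungDiagram).rowLen 0 = 0 :=
          rowLen_unique (fun j => by simp [YoungDiagram.notMem_bot])
        omega
      avoid := fun _ _ _ _ _ _ _ => rfl }
  uniq T := by
    have hrows : T.rows = 1 := by
      have := T.half; have := T.rows_pos; omega
    have hrl : T.shape.rowLen 0 = 0 := by
      have := T.half; have := T.rows_pos; omega
    have hshape : T.shape = ⊥ := by
      ext ⟨i, j⟩
      simp only [YoungDiagram.mem_cells, YoungDiagram.cells_bot, Finset.notMem_empty,
        iff_false]
      intro hmem
      have h00 : (0, 0) ∈ T.shape :=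
        T.shape.up_left_mem (Nat.zero_le _) (Nat.zero_le _) hmem
      have := YoungDiagram.mem_iff_lt_rowLen.mp h00
      omega
    refine pt_ext hshape hrows ?_
    funext c
    exact T.support c (by rw [hshape]; exact YoungDiagram.notMem_bot c)

lemma U_size_one (T : PermTableau 1) : T.U = 1 := by
  rw [U_eq_card_URF]
  have hrows : T.rows = 1 := by
    have := T.half; have := T.rows_pos; omega
  have : T.URF = {0} := by
    ext i
    rw [mem_URF, Finset.mem_singleton, hrows]
    constructor
    · rintro ⟨hi, _⟩; omega
    · rintro rfl
      refine ⟨Nat.one_pos, ?_⟩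
      intro j hj hf i' hi'
      omega
  rw [this]
  rfl

lemma sum_pow_U (m : ℕ) (hm : 1 ≤ m) (x : ℕ) :
    ∑ T : PermTableau m, x ^ T.U = ∏ k ∈ Finset.range m, (x + k) := by
  induction m, hm using Nat.le_induction generalizing x with
  | base =>
    have h1 : ∀ T : PermTableau 1, x ^ T.U = x := fun T => by rw [U_size_one, pow_one]
    rw [Finset.sum_congr rfl (fun T _ => h1 T), Finset.sum_const, Finset.card_univ,
      Fintype.card_unique]
    simp
  | succ m hm ih =>
    rw [sum_step hm x, ih (x + 1), Finset.prod_range_succ' (fun k => x + k)]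
    have : ∀ k, x + 1 + k = x + (k + 1) := fun k => by omega
    rw [Finset.prod_congr rfl (fun k _ => this k)]
    ring

end PermTableau
end Count
section Final
open Finset

lemma card_permTableau (m : ℕ) (hm : 1 ≤ m) : Nat.card (PermTableau m) = m ! := by
  have h := PermTableau.sum_pow_U m hm 1
  have h1 : ∀ T : PermTableau m, (1 : ℕ) ^ T.U = 1 := fun T => one_pow _
  rw [Finset.sum_congr rfl (fun T _ => h1 T), Finset.sum_const, Finset.card_univ,
    smul_eq_mul, mul_one] at h
  rw [Nat.card_eq_fintype_card, h]
  rw [← Finset.prod_range_add_one_eq_factorial]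
  exact Finset.prod_congr rfl fun k _ => by omega
/-- The number of permutation tableaux of size `n` whose last border edge (the `n`-th
step of the southeast border) is a south step equals `(n - 1) !`. -/
theorem card_permTableau_last_south (n : ℕ) (hn : 1 ≤ n) :
    Nat.card {T : PermTableau n // T.south n} = (n - 1) ! := by
  have e0 : {T : PermTableau n // T.south n}
      ≃ {T : PermTableau n // T.shape.colLen 0 < T.rows} :=
    Equiv.subtypeEquivRight (fun T => T.south_iff_colLen_lt_rows)
  rcases eq_or_lt_of_le hn with h1 | h2
  · -- n = 1
    subst h1
    have hall : ∀ T : PermTableau 1, T.shape.colLen 0 < T.rows := by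
      intro T
      have hrows : T.rows = 1 := by have := T.half; have := T.rows_pos; omega
      have hrl : T.shape.rowLen 0 = 0 := by have := T.half; have := T.rows_pos; omega
      have := rowLen_eq_zero_iff.mp hrl
      omega
    have e1 : {T : PermTableau 1 // T.shape.colLen 0 < T.rows} ≃ PermTableau 1 :=
      Equiv.subtypeUnivEquiv hall
    rw [Nat.card_congr (e0.trans e1), card_permTableau 1 le_rfl]
    rfl
  · obtain ⟨m, rfl⟩ : ∃ m, n = m + 1 := ⟨n - 1, by omega⟩
    have hm : 1 ≤ m := by omega
    rw [Nat.card_congr (e0.trans (PermTableau.southEquiv hm)), card_permTableau m hm]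
    simp
end Final
end
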